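/- Fix integers n≥2 and even m≥2, and let g_A,g_B,X∈S_{mn} be the standard reflected-entropy boundary elements. In S_{2mn}, acting independently on two copies of {1,…,mn}, set g̃_A=g_A⊕g_A, g̃_B=g_B⊕g_B, X̃=X⊕X, and let q̃_A=q_{X̃}(g̃_A), q̃_B=q_{X̃}(g̃_B)∈P_{4n} be the coarse grainings by X̃ (the first 2n positions coming from the first copy and the last 2n from the second). Then for every q∈P_{4n}: d(q̃_A,q)+d(q,q̃_B)≥d(q̃_A,q̃_B)+2(1−δ_{#₁⁽¹⁾(q),0})+2(1−δ_{#₁⁽²⁾(q),0})+2δ_{q∨τ,𝟙}, where #₁⁽¹⁾(q) and #₁⁽²⁾(q) count the singlets of q among the first and last 2n positions respectively, τ∈P_{4n} is the two-block partition {{1,…,2n},{2n+1,…,4n}}, and δ_{q∨τ,𝟙}=1 if and only if q∨τ is the one-block partition of {1,…,4n}. -/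

import Mathlib

open scoped Classical

noncomputable section

namespace RTN

/-! ## Set partitions -/

/-- Number of blocks of a set partition (as an integer). -/
def nb {α : Type*} (p : Setoid α) : ℤ := Nat.card (Quotient p)

/-- The partition distance `d(p,q) = #(p) + #(q) - 2 #(p ⊔ q)`. -/
def pdist {α : Type*} (p q : Setoid α) : ℤ := nb p + nb q - 2 * nb (p ⊔ q)

lemma pdist_comm {α : Type*} (p q : Setoid α) : pdist p q = pdist q p := by
  unfold pdist
  rw [sup_comm p q]
  ring

/-- `k` is a singlet (block of size one) of the partition `p`. -/
def IsSinglet {α : Type*} (p : Setoid α) (k : α) : Prop := ∀ y, p.r k y → y = k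

/-- The number of singlets `#₁(p)` of a partition. -/
def nS {α : Type*} (p : Setoid α) : ℤ := Nat.card {k : α // IsSinglet p k}

/-- The singlet distance `d₁(s₁,s₂) = #₁(s₁) + #₁(s₂) - 2 #₁(s₁ ⊔ s₂)`. -/
def sdist {α : Type*} (s₁ s₂ : Setoid α) : ℤ := nS s₁ + nS s₂ - 2 * nS (s₁ ⊔ s₂)

/-- The singlet pattern `s(p)`: the coarsest partition whose singlets are exactly
those of `p` (all non-singlet elements lie in one block). -/
def spat {α : Type*} (p : Setoid α) : Setoid α where
  r x y := x = y ∨ (¬ IsSinglet p x ∧ ¬ IsSinglet p y)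
  iseqv := by
    refine ⟨fun x => Or.inl rfl, ?_, ?_⟩
    · intro x y h
      rcases h with rfl | ⟨hx, hy⟩
      · exact Or.inl rfl
      · exact Or.inr ⟨hy, hx⟩
    · intro x y z h1 h2
      rcases h1 with rfl | ⟨hx, hy⟩
      · exact h2
      · rcases h2 with rfl | ⟨_, hz⟩
        · exact Or.inr ⟨hx, hy⟩
        · exact Or.inr ⟨hx, hz⟩

/-- The bit `b^k(p)`: `0` if `p` has a singlet at `k`, else `1`. -/
def bbit {α : Type*} (p : Setoid α) (k : α) : ℤ := if IsSinglet p k then 0 else 1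

/-- The size of the block of `p` containing `x`. -/
def blockSize {α : Type*} (p : Setoid α) (x : α) : ℕ := Nat.card {y : α // p.r x y}

noncomputable instance {α : Type*} [Finite α] (s : Setoid α) : Fintype (Quotient s) :=
  Fintype.ofFinite _

/-! ## Permutations -/

/-- The partition of `α` into orbits (cycles) of a permutation. -/
def orbitSetoid {α : Type*} (g : Equiv.Perm α) : Setoid α where
  r x y := ∃ k : ℤ, (g ^ k) x = y
  iseqv := by
    refine ⟨fun x => ⟨0, by simp⟩, ?_, ?_⟩
    · rintro x y ⟨k, rfl⟩
      exact ⟨-k, by simp [← Equiv.Perm.mul_apply, ← zpow_add]⟩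
    · rintro x y z ⟨k, rfl⟩ ⟨l, rfl⟩
      exact ⟨l + k, by rw [zpow_add, Equiv.Perm.mul_apply]⟩

/-- The number of cycles `#(g)` of a permutation (fixed points included). -/
def ncyc {α : Type*} (g : Equiv.Perm α) : ℤ := nb (orbitSetoid g)

/-- The Cayley distance `d(g,h) = N - #(g h⁻¹)`. -/
def cayley {α : Type*} [Fintype α] (g h : Equiv.Perm α) : ℤ :=
  (Fintype.card α : ℤ) - ncyc (g * h⁻¹)

lemma orbitSetoid_inv {α : Type*} (g : Equiv.Perm α) : orbitSetoid g⁻¹ = orbitSetoid g := by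
  apply Setoid.ext
  intro x y
  constructor
  · rintro ⟨k, hk⟩
    exact ⟨-k, by rw [← inv_zpow']; exact hk⟩
  · rintro ⟨k, hk⟩
    exact ⟨-k, by rw [inv_zpow', neg_neg]; exact hk⟩

lemma cayley_comm {α : Type*} [Fintype α] (g h : Equiv.Perm α) : cayley g h = cayley h g := by
  unfold cayley ncyc
  rw [show h * g⁻¹ = (g * h⁻¹)⁻¹ by rw [mul_inv_rev, inv_inv], orbitSetoid_inv]

/-- Coarse graining of a partition `p` by the blocks of `P(g₀)`: the partition of the set
of blocks of `P(g₀)` induced by `p ⊔ P(g₀)`. -/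
def coarse {α : Type*} (g₀ : Equiv.Perm α) (p : Setoid α) :
    Setoid (Quotient (orbitSetoid g₀)) where
  r u v := ∃ x y : α, Quotient.mk (orbitSetoid g₀) x = u ∧ Quotient.mk (orbitSetoid g₀) y = v ∧
    (p ⊔ orbitSetoid g₀).r x y
  iseqv := by
    refine ⟨?_, ?_, ?_⟩
    · intro u
      obtain ⟨x, rfl⟩ := Quotient.exists_rep u
      exact ⟨x, x, rfl, rfl, (p ⊔ orbitSetoid g₀).iseqv.refl x⟩
    · rintro u v ⟨x, y, hx, hy, hxy⟩
      exact ⟨y, x, hy, hx, (p ⊔ orbitSetoid g₀).iseqv.symm hxy⟩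
    · rintro u v w ⟨x, y, hx, hy, hxy⟩ ⟨y', z, hy', hz, hyz⟩
      refine ⟨x, z, hx, hz, ?_⟩
      have h1 : (orbitSetoid g₀).r y y' := Quotient.exact (hy.trans hy'.symm)
      have h2 : (p ⊔ orbitSetoid g₀).r y y' :=
        (le_sup_right : orbitSetoid g₀ ≤ p ⊔ orbitSetoid g₀) h1
      exact (p ⊔ orbitSetoid g₀).iseqv.trans hxy
        ((p ⊔ orbitSetoid g₀).iseqv.trans h2 hyz)

/-- The coarse graining `q_{g₀}(g) ∈ P_{#(g₀)}` of a permutation `g`. -/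
def qc {α : Type*} (g₀ g : Equiv.Perm α) : Setoid (Quotient (orbitSetoid g₀)) :=
  coarse g₀ (orbitSetoid g)

/-! ## Standard reflected-entropy boundary elements -/

/-- `g_B`, the product of `n` disjoint `m`-cycles `(k,ℓ) ↦ (k,ℓ+1)`. -/
def gB (n m : ℕ) : Equiv.Perm (Fin n × Fin m) :=
  Equiv.prodCongr (Equiv.refl (Fin n)) (finRotate m)

/-- `γ`, cyclically shifting `k ↦ k+1` on the elements with `ℓ` in the lower half,
fixing the rest. -/
def gamma (n m : ℕ) : Equiv.Perm (Fin n × Fin m) where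
  toFun x := if m / 2 ≤ (x.2 : ℕ) then (finRotate n x.1, x.2) else x
  invFun x := if m / 2 ≤ (x.2 : ℕ) then ((finRotate n).symm x.1, x.2) else x
  left_inv := by
    intro x
    by_cases h : m / 2 ≤ (x.2 : ℕ) <;> simp [h, -finRotate_apply, -finRotate_symm_apply]
  right_inv := by
    intro x
    by_cases h : m / 2 ≤ (x.2 : ℕ) <;> simp [h, -finRotate_apply, -finRotate_symm_apply]

/-- `g_A = γ⁻¹ g_B γ`. -/
def gA (n m : ℕ) : Equiv.Perm (Fin n × Fin m) :=
  (gamma n m)⁻¹ * gB n m * gamma n m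

/-- For even `m`, `Fin m` splits into an upper and a lower half. -/
def halfEquiv (m : ℕ) (hm : m % 2 = 0) : Fin 2 × Fin (m / 2) ≃ Fin m :=
  finProdFinEquiv.trans (finCongr (by omega))

/-- `X`, the product of the `2n` disjoint `(m/2)`-cycles cyclically permuting the
upper and the lower half of each block `k`. -/
def Xel (n m : ℕ) (hm : m % 2 = 0) : Equiv.Perm (Fin n × Fin m) :=
  Equiv.prodCongr (Equiv.refl (Fin n))
    ((halfEquiv m hm).permCongr
      (Equiv.prodCongr (Equiv.refl (Fin 2)) (finRotate (m / 2))))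

/-- The set of blocks of `P(X)`; it has `2n` elements. -/
abbrev BX (n m : ℕ) (hm : m % 2 = 0) := Quotient (orbitSetoid (Xel n m hm))

/-- `q_A = q_X(g_A) ∈ P_{2n}`. -/
def qAel (n m : ℕ) (hm : m % 2 = 0) : Setoid (BX n m hm) :=
  qc (Xel n m hm) (gA n m)

/-- `q_B = q_X(g_B) ∈ P_{2n}`. -/
def qBel (n m : ℕ) (hm : m % 2 = 0) : Setoid (BX n m hm) :=
  qc (Xel n m hm) (gB n m)

/-! ## Doubled elements (two copies) -/

/-- Two copies of the index set `{1,…,mn}`. -/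
abbrev DIdx (n m : ℕ) := (Fin n × Fin m) ⊕ (Fin n × Fin m)

/-- `g̃_A = g_A ⊕ g_A`. -/
def gAt (n m : ℕ) : Equiv.Perm (DIdx n m) := Equiv.sumCongr (gA n m) (gA n m)

/-- `g̃_B = g_B ⊕ g_B`. -/
def gBt (n m : ℕ) : Equiv.Perm (DIdx n m) := Equiv.sumCongr (gB n m) (gB n m)

/-- `X̃ = X ⊕ X`. -/
def Xt (n m : ℕ) (hm : m % 2 = 0) : Equiv.Perm (DIdx n m) :=
  Equiv.sumCongr (Xel n m hm) (Xel n m hm)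

/-- The set of blocks of `P(X̃)`; it has `4n` elements. -/
abbrev BXt (n m : ℕ) (hm : m % 2 = 0) := Quotient (orbitSetoid (Xt n m hm))

/-- `q̃_A = q_{X̃}(g̃_A) ∈ P_{4n}`. -/
def qAt (n m : ℕ) (hm : m % 2 = 0) : Setoid (BXt n m hm) :=
  qc (Xt n m hm) (gAt n m)

/-- `q̃_B = q_{X̃}(g̃_B) ∈ P_{4n}`. -/
def qBt (n m : ℕ) (hm : m % 2 = 0) : Setoid (BXt n m hm) :=
  qc (Xt n m hm) (gBt n m)

/-- A block of `P(X̃)` lies in the first copy. -/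
def inCopy1 {n m : ℕ} {hm : m % 2 = 0} (u : BXt n m hm) : Prop :=
  ∃ x, Quotient.mk (orbitSetoid (Xt n m hm)) (Sum.inl x) = u

/-- `#₁⁽¹⁾(q)`: the number of singlets of `q` among the first-copy positions. -/
def nS1 {n m : ℕ} {hm : m % 2 = 0} (q : Setoid (BXt n m hm)) : ℤ :=
  Nat.card {u : BXt n m hm // IsSinglet q u ∧ inCopy1 u}

/-- `#₁⁽²⁾(q)`: the number of singlets of `q` among the second-copy positions. -/
def nS2 {n m : ℕ} {hm : m % 2 = 0} (q : Setoid (BXt n m hm)) : ℤ :=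
  Nat.card {u : BXt n m hm // IsSinglet q u ∧ ¬ inCopy1 u}

/-- `τ ∈ P_{4n}`, the two-block partition separating the two copies. -/
def tau (n m : ℕ) (hm : m % 2 = 0) : Setoid (BXt n m hm) where
  r u v := inCopy1 u ↔ inCopy1 v
  iseqv := ⟨fun _ => Iff.rfl, Iff.symm, Iff.trans⟩

/-! ## Graphs, cuts and optimization programs -/

variable {V : Type*}

/-- Sum of an edge function along (the edge list of) a walk, with multiplicity. -/
def wkSum {β : Type*} [AddCommMonoid β] {G : SimpleGraph V} {x y : V}
    (f : Sym2 V → β) (L : G.Walk x y) : β :=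
  (L.edges.map f).sum

variable [Fintype V]

/-- Sum of an edge weight function over a set of edges. -/
def wsum (f : Sym2 V → ℝ) (S : Set (Sym2 V)) : ℝ :=
  ∑ e ∈ Finset.univ.filter (· ∈ S), f e

/-- The cut surface `μ(r)`: edges of `G` with one endpoint in `r`, the other outside. -/
def mu (G : SimpleGraph V) (r : Set V) : Set (Sym2 V) :=
  {e | e ∈ G.edgeSet ∧ ∃ x y, e = s(x, y) ∧ x ∈ r ∧ y ∉ r}

/-- `μ(r₁:r₂)`: edges of `G` with an endpoint in `r₁` and an endpoint in `r₂`. -/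
def mu2 (G : SimpleGraph V) (r₁ r₂ : Set V) : Set (Sym2 V) :=
  {e | e ∈ G.edgeSet ∧ ∃ x y, e = s(x, y) ∧ x ∈ r₁ ∧ y ∈ r₂}

/-- `r` is a cut for `X : Y`. -/
def IsCut (X Y r : Set V) : Prop := X ⊆ r ∧ Y ⊆ rᶜ

/-- The minimal cut area `𝒜(X:Y)`. -/
def minCut (G : SimpleGraph V) (w : Sym2 V → ℝ) (X Y : Set V) : ℝ :=
  sInf {a | ∃ r : Set V, IsCut X Y r ∧ a = wsum w (mu G r)}

/-- `(α,β,γ)` is a triway cut for `(A,B,C)`. -/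
def IsTriway (A B C α β γ : Set V) : Prop :=
  α ∪ β ∪ γ = Set.univ ∧ Disjoint α β ∧ Disjoint β γ ∧ Disjoint α γ ∧
    A ⊆ α ∧ B ⊆ β ∧ C ⊆ γ

/-- The area of a triway cut with tensions `(t_{A:B}, t_{B:C}, t_{C:A})`. -/
def triArea (G : SimpleGraph V) (w : Sym2 V → ℝ) (tAB tBC tCA : ℝ)
    (α β γ : Set V) : ℝ :=
  tAB * wsum w (mu2 G α β) + tBC * wsum w (mu2 G β γ) + tCA * wsum w (mu2 G γ α)

/-- The minimal triway cut area `𝒜_t(A:B:C)`. -/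
def triCut (G : SimpleGraph V) (w : Sym2 V → ℝ) (tAB tBC tCA : ℝ)
    (A B C : Set V) : ℝ :=
  sInf {a | ∃ α β γ : Set V, IsTriway A B C α β γ ∧ a = triArea G w tAB tBC tCA α β γ}

/-- Boundary data: `∂ = A ⊔ B ⊔ C` (pairwise disjoint). -/
def Bdy (A B C : Set V) : Prop := Disjoint A B ∧ Disjoint A C ∧ Disjoint B C

/-! ### The permutation optimization `R` -/

/-- The symmetric edge function induced by the Cayley distance of a vertex
configuration of permutations. -/
def permE {ι : Type*} [Fintype ι] (g : V → Equiv.Perm ι) : Sym2 V → ℝ :=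
  Sym2.lift ⟨fun x y => (cayley (g x) (g y) : ℝ),
    fun x y => congrArg Int.cast (cayley_comm (g x) (g y))⟩

/-- The free energy `R(g) = Σ_e w(e) d(g(x),g(y))`. -/
def Renergy {ι : Type*} [Fintype ι] (G : SimpleGraph V) (w : Sym2 V → ℝ)
    (g : V → Equiv.Perm ι) : ℝ :=
  wsum (fun e => w e * permE g e) G.edgeSet

/-- The optimal value `R` of the permutation optimization. -/
def Rval {ι : Type*} [Fintype ι] (G : SimpleGraph V) (w : Sym2 V → ℝ)
    (A B C : Set V) (g₁ g₂ : Equiv.Perm ι) : ℝ :=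
  sInf {a | ∃ g : V → Equiv.Perm ι,
    (∀ v ∈ A, g v = g₁) ∧ (∀ v ∈ B, g v = g₂) ∧ (∀ v ∈ C, g v = 1) ∧
    a = Renergy G w g}

/-! ### The set-partition optimization `Q` -/

/-- The symmetric integer edge function induced by the partition distance of a vertex
configuration of partitions. -/
def partEZ {κ : Type*} (q : V → Setoid κ) : Sym2 V → ℤ :=
  Sym2.lift ⟨fun x y => pdist (q x) (q y), fun x y => pdist_comm (q x) (q y)⟩

/-- The free energy `Q(q) = Σ_e w(e) d(q(x),q(y))`. -/
def Qenergy {κ : Type*} (G : SimpleGraph V) (w : Sym2 V → ℝ)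
    (q : V → Setoid κ) : ℝ :=
  wsum (fun e => w e * (partEZ q e : ℝ)) G.edgeSet

/-- The optimal value `Q` of the set-partition optimization. -/
def Qval {κ : Type*} (G : SimpleGraph V) (w : Sym2 V → ℝ)
    (A B C : Set V) (q₁ q₂ : Setoid κ) : ℝ :=
  sInf {a | ∃ q : V → Setoid κ,
    (∀ v ∈ A, q v = q₁) ∧ (∀ v ∈ B, q v = q₂) ∧ (∀ v ∈ C, q v = ⊥) ∧
    a = Qenergy G w q}

/-! ### The Boolean optimization `B` -/

/-- The Hamming distance between two bit strings. -/
def ham {κ : Type*} [Fintype κ] (b₁ b₂ : κ → Bool) : ℤ :=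
  ∑ k : κ, if b₁ k = b₂ k then 0 else 1

/-- The bit string `b(q)` of a partition: `false` exactly at singlets. -/
def bvec {κ : Type*} (p : Setoid κ) : κ → Bool :=
  fun u => if IsSinglet p u then false else true

/-- Feasibility of `r` for the Boolean program at configuration `b`. -/
def Bfeas {κ : Type*} [Fintype κ] (G : SimpleGraph V) (A B : Set V) (n : ℕ)
    (b : V → κ → Bool) (r : Sym2 V → ℕ) : Prop :=
  (∀ x ∈ A, ∀ y ∈ B, ∀ L : G.Walk x y,
    2 ∣ wkSum (fun e => (r e : ℤ)) L ∧
    wkSum (fun e => (r e : ℤ)) L ≥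
      2 * ((n : ℤ) - if ∀ v ∈ L.support, ∀ k, b v k = true then 1 else 0)) ∧
  (∀ x y : V, G.Adj x y → (r s(x, y) : ℤ) ≥ ⌈(ham (b x) (b y) : ℚ) / 2⌉)

/-- The inner Boolean optimum `B(b)` at a fixed Boolean configuration `b`. -/
def BvalAt {κ : Type*} [Fintype κ] (G : SimpleGraph V) (w : Sym2 V → ℝ)
    (A B : Set V) (n : ℕ) (b : V → κ → Bool) : ℝ :=
  sInf {a | ∃ r : Sym2 V → ℕ, Bfeas G A B n b r ∧
    a = wsum (fun e => w e * (r e : ℝ)) G.edgeSet}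

/-- The optimal value `B` of the Boolean optimization. -/
def Bval (κ : Type*) [Fintype κ] (G : SimpleGraph V) (w : Sym2 V → ℝ)
    (A B C : Set V) (n : ℕ) : ℝ :=
  sInf {a | ∃ b : V → κ → Bool,
    (∀ v ∈ A ∪ B, ∀ k, b v k = true) ∧ (∀ v ∈ C, ∀ k, b v k = false) ∧
    ∃ r : Sym2 V → ℕ, Bfeas G A B n b r ∧
      a = wsum (fun e => w e * (r e : ℝ)) G.edgeSet}

/-! ### The integer program `I` -/

/-- Feasibility of `(ρ,σ)` for the integer program. -/
def IPfeas (G : SimpleGraph V) (A B C : Set V) (n : ℕ) (ρ σ : Sym2 V → ℕ) : Prop :=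
  (∀ x ∈ A, ∀ y ∈ B, ∀ L : G.Walk x y,
    2 ∣ wkSum (fun e => (σ e : ℤ) + (ρ e : ℤ)) L ∧
    wkSum (fun e => (σ e : ℤ) + (ρ e : ℤ)) L ≥
      2 * ((n : ℤ) - if wkSum (fun e => (ρ e : ℤ)) L = 0 then 1 else 0)) ∧
  (∀ x ∈ A ∪ B, ∀ y ∈ C, ∀ L : G.Walk x y,
    wkSum (fun e => (ρ e : ℤ)) L ≥ (n : ℤ))

/-- The objective of the integer program. -/
def IPobj (G : SimpleGraph V) (w : Sym2 V → ℝ) (ρ σ : Sym2 V → ℕ) : ℝ :=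
  wsum (fun e => w e * ((σ e : ℝ) + (ρ e : ℝ))) G.edgeSet

/-- The optimal value `I` of the integer program. -/
def Ival (G : SimpleGraph V) (w : Sym2 V → ℝ) (A B C : Set V) (n : ℕ) : ℝ :=
  sInf {a | ∃ ρ σ : Sym2 V → ℕ, IPfeas G A B C n ρ σ ∧ a = IPobj G w ρ σ}

/-! ### The ℓ-intersecting cut problem `M` -/

/-- Feasibility for the `ℓ`-intersecting cut problem with boundary sets
`Γ₀, …, Γ_ℓ` and `C`, for a half-integer valued `ϱ`. -/
def Mfeas (G : SimpleGraph V) (Γ : ℕ → Set V) (ℓ : ℕ) (C : Set V)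
    (ϱ : Sym2 V → ℚ) : Prop :=
  (∀ e, ∃ j : ℕ, ϱ e = (j : ℚ) / 2) ∧
  (∀ k k' : ℕ, k ≤ ℓ → k' ≤ ℓ → ∀ x ∈ Γ k, ∀ y ∈ Γ k', ∀ L : G.Walk x y,
    ∃ j : ℕ, wkSum ϱ L = |(k : ℚ) - (k' : ℚ)| + (j : ℚ)) ∧
  (∀ k : ℕ, k ≤ ℓ → ∀ x ∈ Γ k, ∀ y ∈ C, ∀ L : G.Walk x y,
    ∃ j : ℕ, wkSum ϱ L = (ℓ : ℚ) / 2 + (j : ℚ))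

/-- The objective of the `ℓ`-intersecting cut problem. -/
def Mobj (G : SimpleGraph V) (w : Sym2 V → ℝ) (ϱ : Sym2 V → ℚ) : ℝ :=
  wsum (fun e => w e * (ϱ e : ℝ)) G.edgeSet

/-- The optimal value `M` of the `ℓ`-intersecting cut problem. -/
def Mval (G : SimpleGraph V) (w : Sym2 V → ℝ) (Γ : ℕ → Set V) (ℓ : ℕ)
    (C : Set V) : ℝ :=
  sInf {a | ∃ ϱ : Sym2 V → ℚ, Mfeas G Γ ℓ C ϱ ∧ a = Mobj G w ϱ}

/-- The complementary reduced graph `G^c`: the edges of `G` not lying entirely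
inside `V'`. -/
def reducedGraph (G : SimpleGraph V) (V' : Set V) : SimpleGraph V where
  Adj x y := G.Adj x y ∧ ¬ (x ∈ V' ∧ y ∈ V')
  symm := by
    constructor
    intro x y h
    exact ⟨h.1.symm, fun hc => h.2 ⟨hc.2, hc.1⟩⟩
  loopless := by
    constructor
    intro x h
    exact G.loopless.irrefl x h.1

end RTN
set_option linter.unusedSectionVars false
set_option linter.unusedVariables false

namespace RTNAux2Pre
end RTNAux2Pre
namespace RTNAux

/-- the setoid relating `x` and `y` (and nothing else non-trivially). -/
def pairS {α : Type*} (x y : α) : Setoid α where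
  r a b := a = b ∨ (a = x ∧ b = y) ∨ (a = y ∧ b = x)
  iseqv := by
    refine ⟨fun a => Or.inl rfl, ?_, ?_⟩
    · rintro a b (rfl | ⟨rfl, rfl⟩ | ⟨rfl, rfl⟩) <;> tauto
    · rintro a b c h1 h2
      rcases h1 with h | ⟨h1a, h1b⟩ | ⟨h1a, h1b⟩ <;>
        rcases h2 with h' | ⟨h2a, h2b⟩ | ⟨h2a, h2b⟩ <;> subst_vars <;> tauto

lemma pairS_iff {α : Type*} (x y a b : α) :
    (pairS x y).r a b ↔ (a = b ∨ (a = x ∧ b = y) ∨ (a = y ∧ b = x)) := Iff.rfl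

lemma pairS_rel {α : Type*} (x y : α) : (pairS x y).r x y :=
  (pairS_iff x y x y).mpr (Or.inr (Or.inl ⟨rfl, rfl⟩))

lemma pairS_le {α : Type*} {x y : α} {s : Setoid α} (h : s.r x y) : pairS x y ≤ s := by
  intro a b hab
  rcases (pairS_iff x y a b).mp hab with rfl | ⟨rfl, rfl⟩ | ⟨rfl, rfl⟩
  · exact s.refl a
  · exact h
  · exact s.symm h

/-- the explicit merge of the classes of `x` and `y` in `p`. -/
def mergeS {α : Type*} (p : Setoid α) (x y : α) : Setoid α where
  r a b := p.r a b ∨ (p.r a x ∧ p.r y b) ∨ (p.r a y ∧ p.r x b)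
  iseqv := by
    refine ⟨fun a => Or.inl (p.refl a), ?_, ?_⟩
    · rintro a b (h | ⟨h1, h2⟩ | ⟨h1, h2⟩)
      · exact Or.inl (p.symm h)
      · exact Or.inr (Or.inr ⟨p.symm h2, p.symm h1⟩)
      · exact Or.inr (Or.inl ⟨p.symm h2, p.symm h1⟩)
    · rintro a b c (h | ⟨h1, h2⟩ | ⟨h1, h2⟩) (h' | ⟨h1', h2'⟩ | ⟨h1', h2'⟩)
      · exact Or.inl (p.trans h h')
      · exact Or.inr (Or.inl ⟨p.trans h h1', h2'⟩)
      · exact Or.inr (Or.inr ⟨p.trans h h1', h2'⟩)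
      · exact Or.inr (Or.inl ⟨h1, p.trans h2 h'⟩)
      · exact Or.inl (p.trans h1 (p.trans (p.symm (p.trans h2 h1')) h2'))
      · exact Or.inl (p.trans h1 h2')
      · exact Or.inr (Or.inr ⟨h1, p.trans h2 h'⟩)
      · exact Or.inl (p.trans h1 h2')
      · exact Or.inl (p.trans h1 (p.trans (p.symm (p.trans h2 h1')) h2'))

lemma sup_pairS_eq_mergeS {α : Type*} (p : Setoid α) (x y : α) :
    p ⊔ pairS x y = mergeS p x y := by
  apply le_antisymm
  · apply sup_le
    · intro a b h; exact Or.inl h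
    · intro a b hab
      rcases (pairS_iff x y a b).mp hab with rfl | ⟨rfl, rfl⟩ | ⟨rfl, rfl⟩
      · exact Or.inl (p.refl a)
      · exact Or.inr (Or.inl ⟨p.refl _, p.refl _⟩)
      · exact Or.inr (Or.inr ⟨p.refl _, p.refl _⟩)
  · rintro a b (h | ⟨h1, h2⟩ | ⟨h1, h2⟩)
    · exact le_sup_left (α := Setoid α) h
    · exact Setoid.trans' _ (le_sup_left (α := Setoid α) h1)
        (Setoid.trans' _ (le_sup_right (α := Setoid α) (pairS_rel x y))
          (le_sup_left (α := Setoid α) h2))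
    · exact Setoid.trans' _ (le_sup_left (α := Setoid α) h1)
        (Setoid.trans' _ (le_sup_right (α := Setoid α) (Setoid.symm' _ (pairS_rel x y)))
          (le_sup_left (α := Setoid α) h2))


section NB

variable {α : Type*} [Finite α]

open RTN

lemma quotient_map_surj {p q : Setoid α} (h : p ≤ q) :
    Function.Surjective (Quotient.map' (fun a => a) (fun a b hab => h hab) :
      Quotient p → Quotient q) := by
  intro z
  obtain ⟨a, rfl⟩ := Quotient.exists_rep z
  exact ⟨Quotient.mk p a, rfl⟩

lemma nb_antitone {p q : Setoid α} (h : p ≤ q) : nb q ≤ nb p := by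
  unfold RTN.nb
  exact_mod_cast Nat.card_le_card_of_surjective _ (quotient_map_surj h)

lemma nb_sup_pair_lt {p : Setoid α} {x y : α} (hxy : ¬ p.r x y) :
    nb (p ⊔ pairS x y) + 1 ≤ nb p := by
  classical
  have hle : p ≤ p ⊔ pairS x y := le_sup_left
  let f : Quotient p → Quotient (p ⊔ pairS x y) :=
    Quotient.map' (fun a => a) (fun a b hab => hle hab)
  have hf : Function.Surjective f := quotient_map_surj hle
  have hni : ¬ Function.Injective f := by
    intro hinj
    have h1 : f (Quotient.mk p x) = f (Quotient.mk p y) := by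
      apply Quotient.sound
      exact le_sup_right (α := Setoid α) (pairS_rel x y)
    exact hxy (Quotient.exact (hinj h1))
  have := Fintype.card_lt_of_surjective_not_injective f hf hni
  unfold RTN.nb
  rw [Nat.card_eq_fintype_card, Nat.card_eq_fintype_card]
  omega

lemma nb_le_sup_pair {p : Setoid α} (x y : α) :
    nb p ≤ nb (p ⊔ pairS x y) + 1 := by
  classical
  have hle : p ≤ p ⊔ pairS x y := le_sup_left
  let f : Quotient p → Quotient (p ⊔ pairS x y) :=
    Quotient.map' (fun a => a) (fun a b hab => hle hab)
  let g : Quotient p → Quotient (p ⊔ pairS x y) ⊕ Unit := fun z =>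
    if z = Quotient.mk p y then Sum.inr () else Sum.inl (f z)
  have key : ∀ a b : α, f (Quotient.mk p a) = f (Quotient.mk p b) →
      Quotient.mk p a ≠ Quotient.mk p y → Quotient.mk p b ≠ Quotient.mk p y →
      Quotient.mk p a = Quotient.mk p b := by
    intro a b hab ha hb
    have h2 : (mergeS p x y).r a b := by
      rw [← sup_pairS_eq_mergeS]
      exact Quotient.exact hab
    rcases h2 with h | ⟨h1, h2⟩ | ⟨h1, h2⟩
    · exact Quotient.sound h
    · exact absurd (Quotient.sound (p.symm h2) : Quotient.mk p b = Quotient.mk p y) hb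
    · exact absurd (Quotient.sound h1 : Quotient.mk p a = Quotient.mk p y) ha
  have hg : Function.Injective g := by
    intro z z' hzz
    by_cases h1 : z = Quotient.mk p y <;> by_cases h2 : z' = Quotient.mk p y
    · rw [h1, h2]
    · simp only [g, if_pos h1, if_neg h2] at hzz; exact absurd hzz (by simp)
    · simp only [g, if_neg h1, if_pos h2] at hzz; exact absurd hzz (by simp)
    · simp only [g, if_neg h1, if_neg h2, Sum.inl.injEq] at hzz
      obtain ⟨a, rfl⟩ := Quotient.exists_rep z
      obtain ⟨b, rfl⟩ := Quotient.exists_rep z'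
      exact key a b hzz h1 h2
  have := Nat.card_le_card_of_injective g hg
  unfold RTN.nb
  have hcard : Nat.card (Quotient (p ⊔ pairS x y) ⊕ Unit) =
      Nat.card (Quotient (p ⊔ pairS x y)) + 1 := by
    simp [Nat.card_sum]
  omega

lemma singlet_sup_pair {p : Setoid α} {v x y : α} (hv : IsSinglet p v)
    (hx : x ≠ v) (hy : y ≠ v) : IsSinglet (p ⊔ pairS x y) v := by
  intro z hz
  rw [sup_pairS_eq_mergeS] at hz
  rcases hz with h | ⟨h1, h2⟩ | ⟨h1, h2⟩
  · exact hv z h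
  · exact absurd (hv x h1) hx
  · exact absurd (hv y h1) hy

end NB

end RTNAux


namespace RTNAux

section ADDLIST

variable {α : Type*}

open RTN

/-- successively join pairs to a setoid. -/
def addList (p : Setoid α) : List (α × α) → Setoid α
  | [] => p
  | e :: l => addList (p ⊔ pairS e.1 e.2) l

@[simp] lemma addList_nil (p : Setoid α) : addList p [] = p := rfl

@[simp] lemma addList_cons (p : Setoid α) (e : α × α) (l : List (α × α)) :
    addList p (e :: l) = addList (p ⊔ pairS e.1 e.2) l := rfl

lemma addList_mono : ∀ (L : List (α × α)) {p q : Setoid α}, p ≤ q →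
    addList p L ≤ addList q L
  | [], p, q, h => h
  | e :: l, p, q, h => addList_mono l (sup_le_sup_right h _)

lemma le_addList : ∀ (L : List (α × α)) (p : Setoid α), p ≤ addList p L
  | [], p => le_refl p
  | e :: l, p => le_trans le_sup_left (le_addList l (p ⊔ pairS e.1 e.2))

lemma addList_le : ∀ (L : List (α × α)) {p s : Setoid α}, p ≤ s →
    (∀ e ∈ L, s.r e.1 e.2) → addList p L ≤ s
  | [], p, s, h, _ => h
  | e :: l, p, s, h, hall => by
      simp only [addList_cons]
      exact addList_le l (sup_le h (pairS_le (hall e (List.mem_cons_self))))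
        (fun e' he' => hall e' (List.mem_cons_of_mem e he'))

lemma addList_rel : ∀ (L : List (α × α)) (p : Setoid α), ∀ e ∈ L,
    (addList p L).r e.1 e.2
  | e' :: l, p, e, he => by
      rcases List.mem_cons.mp he with rfl | he'
      · exact le_addList l _ (le_sup_right (α := Setoid α) (pairS_rel e.1 e.2))
      · exact addList_rel l _ e he'

lemma addList_sup_comm : ∀ (L : List (α × α)) (p s : Setoid α),
    addList (p ⊔ s) L = addList p L ⊔ s
  | [], p, s => rfl
  | e :: l, p, s => by
      simp only [addList_cons, sup_right_comm p s (pairS e.1 e.2)]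
      exact addList_sup_comm l (p ⊔ pairS e.1 e.2) s

lemma addList_append (p : Setoid α) : ∀ (L₁ L₂ : List (α × α)),
    addList p (L₁ ++ L₂) = addList (addList p L₁) L₂ := by
  intro L₁
  induction L₁ generalizing p with
  | nil => intro L₂; rfl
  | cons e l ih => intro L₂; simp only [List.cons_append, addList_cons]; exact ih _ L₂

/-- a list of pairs is independent over `p` if adding them in order always merges
two distinct blocks. -/
def Indep : Setoid α → List (α × α) → Prop
  | _, [] => True
  | p, e :: l => ¬ p.r e.1 e.2 ∧ Indep (p ⊔ pairS e.1 e.2) l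

lemma Indep_antitone : ∀ (L : List (α × α)) {p q : Setoid α}, q ≤ p →
    Indep p L → Indep q L
  | [], _, _, _, _ => trivial
  | e :: l, p, q, hqp, h => by
      refine ⟨fun hc => h.1 (hqp hc), ?_⟩
      exact Indep_antitone l (sup_le_sup_right hqp _) h.2

lemma Indep_sublist {L L' : List (α × α)} (hsub : List.Sublist L' L) :
    ∀ {p : Setoid α}, Indep p L → Indep p L' := by
  induction hsub with
  | slnil => intro p h; trivial
  | cons e hsub ih =>
      intro p h
      exact ih (Indep_antitone _ le_sup_left h.2)
  | cons_cons e hsub ih =>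
      intro p h
      exact ⟨h.1, ih h.2⟩

section FiniteA

variable [Finite α]

lemma indep_nb_le : ∀ (L : List (α × α)) (p : Setoid α), Indep p L →
    nb (addList p L) + L.length ≤ nb p
  | [], p, _ => by simp
  | e :: l, p, h => by
      have h1 := indep_nb_le l (p ⊔ pairS e.1 e.2) h.2
      have h2 := nb_sup_pair_lt h.1
      simp only [addList_cons, List.length_cons]
      push_cast
      omega

lemma nb_addList_ge : ∀ (L : List (α × α)) (p : Setoid α),
    nb p ≤ nb (addList p L) + L.length
  | [], p => by simp
  | e :: l, p => by
      have h1 := nb_addList_ge l (p ⊔ pairS e.1 e.2)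
      have h2 := nb_le_sup_pair (p := p) e.1 e.2
      simp only [addList_cons, List.length_cons]
      push_cast
      omega

lemma singlet_addList : ∀ (L : List (α × α)) {p : Setoid α} {v : α},
    IsSinglet p v → (∀ e ∈ L, e.1 ≠ v ∧ e.2 ≠ v) → IsSinglet (addList p L) v
  | [], p, v, hv, _ => hv
  | e :: l, p, v, hv, hall => by
      simp only [addList_cons]
      refine singlet_addList l ?_ (fun e' he' => hall e' (List.mem_cons_of_mem e he'))
      exact singlet_sup_pair hv (hall e (List.mem_cons_self)).1
        (hall e (List.mem_cons_self)).2

end FiniteA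

lemma exists_span [Finite α] (P : List (α × α)) (p : Setoid α) :
    ∃ L : List (α × α), (∀ e ∈ L, e ∈ P) ∧ Indep p L ∧ addList p L = addList p P := by
  rcases isEmpty_or_nonempty α with hα | hα
  · refine ⟨[], by simp, trivial, ?_⟩
    apply Setoid.ext
    intro a
    exact (hα.false a).elim
  · suffices H : ∀ N : ℕ, ∀ p : Setoid α, Nat.card (Quotient p) ≤ N →
        ∃ L : List (α × α), (∀ e ∈ L, e ∈ P) ∧ Indep p L ∧ addList p L = addList p P by
      exact H (Nat.card (Quotient p)) p le_rfl
    intro N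
    induction N with
    | zero =>
        intro p hp
        exfalso
        obtain ⟨a0⟩ := hα
        have : Nonempty (Quotient p) := ⟨Quotient.mk p a0⟩
        have := Nat.card_pos (α := Quotient p)
        omega
    | succ N ih =>
        intro p hp
        by_cases hall : ∀ e ∈ P, p.r e.1 e.2
        · refine ⟨[], by simp, trivial, ?_⟩
          simp only [addList_nil]
          exact le_antisymm (le_addList P p) (addList_le P le_rfl hall)
        · push_neg at hall
          obtain ⟨e, heP, hne⟩ := hall
          set p' := p ⊔ pairS e.1 e.2 with hp'
          have hlt := nb_sup_pair_lt hne
          have hcard : Nat.card (Quotient p') ≤ N := by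
            rw [← hp'] at hlt
            unfold RTN.nb at hlt
            omega
          obtain ⟨L', hL'P, hL'i, hL'eq⟩ := ih p' hcard
          refine ⟨e :: L', ?_, ⟨hne, hL'i⟩, ?_⟩
          · intro e' he'
            rcases List.mem_cons.mp he' with rfl | h
            · exact heP
            · exact hL'P e' h
          · have h1 : addList p' P = addList p P ⊔ pairS e.1 e.2 := addList_sup_comm P p _
            have h2 : addList p P ⊔ pairS e.1 e.2 = addList p P :=
              sup_eq_left.mpr (pairS_le (addList_rel P p e heP))
            simp only [addList_cons, ← hp', hL'eq, h1, h2]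

end ADDLIST

end RTNAux

namespace RTNAux

open RTN

section CORE

variable {n : ℕ} [NeZero n]

/-- index type for the `4n` blocks: (copy, position, half). -/
abbrev Iot (n : ℕ) := Fin 2 × Fin n × Fin 2

/-- the matching `q̃_A` as an explicit kernel setoid. -/
def QA (n : ℕ) [NeZero n] : Setoid (Iot n) :=
  Setoid.ker (fun a => (a.1, a.2.1 + (if a.2.2 = 0 then 0 else 1)) : Iot n → Fin 2 × Fin n)

/-- the matching `q̃_B` as an explicit kernel setoid. -/
def QB (n : ℕ) : Setoid (Iot n) :=
  Setoid.ker (fun a => (a.1, a.2.1) : Iot n → Fin 2 × Fin n)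

/-- the two-copies setoid. -/
def TT (n : ℕ) : Setoid (Iot n) := Setoid.ker (fun a => a.1 : Iot n → Fin 2)

lemma QA_iff (a b : Iot n) : (QA n).r a b ↔
    (a.1, a.2.1 + (if a.2.2 = 0 then 0 else 1)) = (b.1, b.2.1 + (if b.2.2 = 0 then 0 else 1)) :=
  Iff.rfl

lemma QB_iff (a b : Iot n) : (QB n).r a b ↔ (a.1, a.2.1) = (b.1, b.2.1) := Iff.rfl

lemma TT_iff (a b : Iot n) : (TT n).r a b ↔ a.1 = b.1 := Iff.rfl

/-- B-type edge. -/
def eB (c : Fin 2) (k : Fin n) : Iot n × Iot n := (((c, k, 0) : Iot n), ((c, k, 1) : Iot n))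

/-- A-type edge. -/
def eA (c : Fin 2) (k : Fin n) : Iot n × Iot n := (((c, k, 1) : Iot n), ((c, k + 1, 0) : Iot n))

lemma QA_rel_eA (c : Fin 2) (k : Fin n) : (QA n).r (eA c k).1 (eA c k).2 := by
  rw [QA_iff]
  simp [eA]

lemma QB_rel_eB (c : Fin 2) (k : Fin n) : (QB n).r (eB c k).1 (eB c k).2 := by
  rw [QB_iff]
  simp [eB]

lemma fin2_cases (x : Fin 2) : x = 0 ∨ x = 1 := by omega

open Fin.NatCast in
lemma cycle_span (J : Setoid (Iot n)) (c : Fin 2) (k₀ : Fin n)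
    (hA : ∀ k, J.r (c, k, 1) (c, k + 1, 0)) (hB : ∀ k, k ≠ k₀ → J.r (c, k, 0) (c, k, 1)) :
    ∀ k h k' h', J.r (c, k, h) (c, k', h') := by
  have claim0 : ∀ t : ℕ, J.r (c, k₀ + 1, 0) (c, k₀ + 1 + (t : Fin n), 0) := by
    intro t
    induction t with
    | zero =>
        simp only [Nat.cast_zero, add_zero]
        exact J.refl _
    | succ t ih =>
      by_cases hk : k₀ + 1 + (t : Fin n) = k₀
      · have he : k₀ + 1 + ((t + 1 : ℕ) : Fin n) = k₀ + 1 := by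
          push_cast
          rw [← add_assoc, hk]
        rw [he]
      · have h1 := hB _ hk
        have h2 := hA (k₀ + 1 + (t : Fin n))
        have he : k₀ + 1 + ((t + 1 : ℕ) : Fin n) = k₀ + 1 + (t : Fin n) + 1 := by
          push_cast
          rw [← add_assoc]
        rw [he]
        exact J.trans ih (J.trans h1 h2)
  have claim1 : ∀ k, J.r (c, k₀ + 1, 0) (c, k, 0) := by
    intro k
    have := claim0 ((k - (k₀ + 1)).val)
    rwa [Fin.cast_val_eq_self, add_comm (k₀ + 1), sub_add_cancel] at this
  have claim2 : ∀ k (h : Fin 2), J.r (c, k₀ + 1, 0) (c, k, h) := by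
    intro k h
    rcases fin2_cases h with rfl | rfl
    · exact claim1 k
    · by_cases hk : k = k₀
      · subst hk
        exact J.symm (hA _)
      · exact J.trans (claim1 k) (hB k hk)
  intro k h k' h'
  exact J.trans (J.symm (claim2 k h)) (claim2 k' h')

lemma QA_le_TT : QA n ≤ TT n := by
  intro a b hab
  rw [QA_iff] at hab
  have h2 := congrArg Prod.fst hab
  exact h2

lemma QB_le_TT : QB n ≤ TT n := by
  intro a b hab
  rw [QB_iff] at hab
  have h2 := congrArg Prod.fst hab
  exact h2

lemma QA_sup_QB : QA n ⊔ QB n = TT n := by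
  apply le_antisymm
  · exact sup_le QA_le_TT QB_le_TT
  · rintro ⟨c, k, h⟩ ⟨c', k', h'⟩ hab
    rw [TT_iff] at hab
    dsimp at hab
    subst hab
    refine cycle_span (QA n ⊔ QB n) c 0 ?_ ?_ k h k' h'
    · intro k
      exact le_sup_left (α := Setoid (Iot n)) (QA_rel_eA c k)
    · intro k _
      exact le_sup_right (α := Setoid (Iot n)) (QB_rel_eB c k)

lemma nb_TT : nb (TT n) = 2 := by
  have hsurj : Function.Surjective (fun a => a.1 : Iot n → Fin 2) := by
    intro c
    exact ⟨(c, 0, 0), rfl⟩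
  have := Setoid.quotientKerEquivOfSurjective _ hsurj
  unfold RTN.nb TT
  rw [Nat.card_congr this]
  simp

lemma nb_top_eq_one {β : Type*} [Nonempty β] : nb (⊤ : Setoid β) = 1 := by
  unfold RTN.nb
  have h1 : Subsingleton (Quotient (⊤ : Setoid β)) := by
    constructor
    intro a b
    obtain ⟨x, rfl⟩ := Quotient.exists_rep a
    obtain ⟨y, rfl⟩ := Quotient.exists_rep b
    exact Quotient.sound trivial
  have h2 : Nonempty (Quotient (⊤ : Setoid β)) :=
    ⟨Quotient.mk _ (Classical.arbitrary β)⟩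
  have h3 := Nat.card_eq_one_iff_unique.mpr ⟨h1, h2⟩
  rw [h3]
  norm_num

end CORE

end RTNAux

namespace RTNAux

open RTN

section GAINS

variable {α : Type*} [Finite α]

lemma Indep_append : ∀ (L₁ : List (α × α)) {L₂ : List (α × α)} {p : Setoid α},
    Indep p L₁ → Indep (addList p L₁) L₂ → Indep p (L₁ ++ L₂)
  | [], L₂, p, _, h₂ => h₂
  | e :: l, L₂, p, h₁, h₂ => by
      refine ⟨h₁.1, ?_⟩
      exact Indep_append l h₁.2 h₂

lemma indep_gains : ∀ (G : List (α × α)) (q : Setoid α),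
    (∀ e ∈ G, e.1 ≠ e.2 ∧ (IsSinglet q e.1 ∨ IsSinglet q e.2)) →
    G.Pairwise (fun e e' => e.1 ≠ e'.1 ∧ e.1 ≠ e'.2 ∧ e.2 ≠ e'.1 ∧ e.2 ≠ e'.2) →
    Indep q G
  | [], q, _, _ => trivial
  | e :: l, q, hs, hp => by
      have he := hs e (List.mem_cons_self)
      constructor
      · intro hc
        rcases he.2 with hv | hv
        · exact he.1 (hv e.2 hc).symm
        · exact he.1 (hv e.1 (q.symm hc))
      · apply indep_gains l
        · intro e' he'
          have h1 := (hs e' (List.mem_cons_of_mem e he')).1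
          have h2 := (hs e' (List.mem_cons_of_mem e he')).2
          have hd := (List.pairwise_cons.mp hp).1 e' he'
          refine ⟨h1, ?_⟩
          rcases h2 with hv | hv
          · exact Or.inl (singlet_sup_pair hv hd.1 hd.2.2.1)
          · exact Or.inr (singlet_sup_pair hv hd.2.1 hd.2.2.2)
        · exact (List.pairwise_cons.mp hp).2

end GAINS

section COREBUILD

variable {n : ℕ} [NeZero n]

lemma eB_fst (c : Fin 2) (k : Fin n) : (eB c k).1 = ((c, k, 0) : Iot n) := rfl
lemma eB_snd (c : Fin 2) (k : Fin n) : (eB c k).2 = ((c, k, 1) : Iot n) := rfl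

lemma core_build (p : Setoid (Iot n)) (KS : List (Fin 2 × Fin n))
    (hnd : (KS.map Prod.fst).Nodup)
    (hsing : ∀ ck ∈ KS, ∃ h : Fin 2, IsSinglet p (ck.1, ck.2, h)) :
    nb (p ⊔ QA n) + nb (p ⊔ QB n) + KS.length ≤ nb p + nb (p ⊔ TT n) := by
  classical
  set allCK : List (Fin 2 × Fin n) := Finset.univ.toList with hallCKdef
  have hallCK : ∀ ck : Fin 2 × Fin n, ck ∈ allCK :=
    fun ck => Finset.mem_toList.mpr (Finset.mem_univ ck)
  set PA : List (Iot n × Iot n) := allCK.map (fun ck => eA ck.1 ck.2) with hPAdef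
  set PB : List (Iot n × Iot n) :=
    (allCK.filter (fun ck => decide (ck ∉ KS))).map (fun ck => eB ck.1 ck.2) with hPBdef
  set P : List (Iot n × Iot n) := PA ++ PB with hPdef
  have hPAmem : ∀ (c : Fin 2) (k : Fin n), eA c k ∈ PA := by
    intro c k
    exact List.mem_map.mpr ⟨(c, k), hallCK _, rfl⟩
  have hPBmem : ∀ (c : Fin 2) (k : Fin n), (c, k) ∉ KS → eB c k ∈ PB := by
    intro c k hk
    refine List.mem_map.mpr ⟨(c, k), ?_, rfl⟩
    exact List.mem_filter.mpr ⟨hallCK _, by simpa using hk⟩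
  have hPAshape : ∀ e ∈ PA, ∃ c k, e = eA c k := by
    intro e he
    obtain ⟨ck, _, rfl⟩ := List.mem_map.mp he
    exact ⟨ck.1, ck.2, rfl⟩
  have hPBshape : ∀ e ∈ PB, ∃ c k, e = eB c k ∧ (c, k) ∉ KS := by
    intro e he
    obtain ⟨ck, hck, rfl⟩ := List.mem_map.mp he
    refine ⟨ck.1, ck.2, rfl, ?_⟩
    have := (List.mem_filter.mp hck).2
    simpa using this
  obtain ⟨L, hLP, hLind, hLeq⟩ := exists_span P p
  have haddP : addList p P = p ⊔ TT n := by
    apply le_antisymm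
    · apply addList_le _ le_sup_left
      intro e he
      rcases List.mem_append.mp he with hA | hB
      · obtain ⟨c, k, rfl⟩ := hPAshape e hA
        exact le_sup_right (α := Setoid (Iot n)) (rfl : (TT n).r (c, k, 1) (c, k + 1, 0))
      · obtain ⟨c, k, rfl, _⟩ := hPBshape e hB
        exact le_sup_right (α := Setoid (Iot n)) (rfl : (TT n).r (c, k, 0) (c, k, 1))
    · apply sup_le (le_addList P p)
      rintro ⟨c, k, h⟩ ⟨c', k', h'⟩ hab
      have hcc : c = c' := hab
      subst hcc
      have hAe : ∀ k'' : Fin n, (addList p P).r (c, k'', 1) (c, k'' + 1, 0) := by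
        intro k''
        exact addList_rel P p (eA c k'') (List.mem_append_left _ (hPAmem c k''))
      by_cases hc : ∃ k0, (c, k0) ∈ KS
      · obtain ⟨k₀, hk₀⟩ := hc
        refine cycle_span _ c k₀ hAe ?_ k h k' h'
        intro k'' hk''
        refine addList_rel P p (eB c k'') (List.mem_append_right _ (hPBmem c k'' ?_))
        intro hmem
        have h9 : ((c, k'') : Fin 2 × Fin n) = (c, k₀) :=
          List.inj_on_of_nodup_map hnd hmem hk₀ rfl
        have h10 := congrArg (fun x : Fin 2 × Fin n => x.2) h9
        exact hk'' h10
      · push_neg at hc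
        refine cycle_span _ c 0 hAe ?_ k h k' h'
        intro k'' _
        exact addList_rel P p (eB c k'') (List.mem_append_right _ (hPBmem c k'' (hc k'')))
  have hlen : nb p ≤ nb (p ⊔ TT n) + L.length := by
    have h1 := nb_addList_ge L p
    rwa [hLeq, haddP] at h1
  set pA : Iot n × Iot n → Bool := fun e => decide (e.1.2.2 = (1 : Fin 2)) with hpAdef
  set LA : List (Iot n × Iot n) := L.filter pA with hLAdef
  set LB : List (Iot n × Iot n) := L.filter (fun e => !(pA e)) with hLBdef
  have hLA : ∀ e ∈ LA, (QA n).r e.1 e.2 := by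
    intro e he
    have heL := (List.mem_filter.mp he).1
    have hpa := (List.mem_filter.mp he).2
    rcases List.mem_append.mp (hLP e heL) with hA | hB
    · obtain ⟨c, k, rfl⟩ := hPAshape e hA
      exact QA_rel_eA c k
    · obtain ⟨c, k, rfl, _⟩ := hPBshape e hB
      exfalso
      rw [hpAdef] at hpa
      simp [eB] at hpa
  have hLB : ∀ e ∈ LB, ∃ c k, e = eB c k ∧ (c, k) ∉ KS := by
    intro e he
    have heL := (List.mem_filter.mp he).1
    have hpa := (List.mem_filter.mp he).2
    rcases List.mem_append.mp (hLP e heL) with hA | hB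
    · obtain ⟨c, k, rfl⟩ := hPAshape e hA
      exfalso
      rw [hpAdef] at hpa
      simp [eA] at hpa
    · exact hPBshape e hB
  set G : List (Iot n × Iot n) := KS.map (fun ck => eB ck.1 ck.2) with hGdef
  have hIndLA : Indep p LA := Indep_sublist (List.filter_sublist) hLind
  have hIndLB : Indep p LB := Indep_sublist (List.filter_sublist) hLind
  have hIndG : Indep (addList p LB) G := by
    apply indep_gains
    · intro e he
      obtain ⟨ck, hck, rfl⟩ := List.mem_map.mp he
      constructor
      · simp [eB]
      · obtain ⟨h, hsg⟩ := hsing ck hck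
        have hsg2 : IsSinglet (addList p LB) (ck.1, ck.2, h) := by
          apply singlet_addList LB hsg
          intro e' he'
          obtain ⟨c', k', rfl, hnotin⟩ := hLB e' he'
          have hne : (c', k') ≠ (ck.1, ck.2) := by
            intro hcc
            rw [hcc] at hnotin
            exact hnotin hck
          constructor
          · rw [eB_fst]
            intro hcc
            exact hne (by
              have h1 := congrArg Prod.fst hcc
              have h2 := congrArg (fun x => x.2.1) hcc
              exact Prod.ext h1 h2)
          · rw [eB_snd]
            intro hcc
            exact hne (by
              have h1 := congrArg Prod.fst hcc
              have h2 := congrArg (fun x => x.2.1) hcc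
              exact Prod.ext h1 h2)
        rcases fin2_cases h with rfl | rfl
        · exact Or.inl hsg2
        · exact Or.inr hsg2
    · rw [hGdef]
      rw [List.pairwise_map]
      have hpw : KS.Pairwise (fun a b => a.1 ≠ b.1) :=
        List.pairwise_map.mp hnd
      apply hpw.imp
      intro a b hab
      refine ⟨?_, ?_, ?_, ?_⟩ <;>
        · intro hcc
          have h9 := congrArg (fun x : Iot n => x.1) hcc
          exact hab h9
  have hIndLB' : Indep p (LB ++ G) := Indep_append LB hIndLB hIndG
  have bA : nb (p ⊔ QA n) + LA.length ≤ nb p := by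
    have h1 : addList p LA ≤ p ⊔ QA n := by
      apply addList_le _ le_sup_left
      intro e he
      exact le_sup_right (α := Setoid (Iot n)) (hLA e he)
    have h2 := nb_antitone h1
    have h3 := indep_nb_le LA p hIndLA
    omega
  have bB : nb (p ⊔ QB n) + LB.length + KS.length ≤ nb p := by
    have h1 : addList p (LB ++ G) ≤ p ⊔ QB n := by
      apply addList_le _ le_sup_left
      intro e he
      rcases List.mem_append.mp he with h | h
      · obtain ⟨c, k, rfl, _⟩ := hLB e h
        exact le_sup_right (α := Setoid (Iot n)) (QB_rel_eB c k)
      · obtain ⟨ck, _, rfl⟩ := List.mem_map.mp h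
        exact le_sup_right (α := Setoid (Iot n)) (QB_rel_eB ck.1 ck.2)
    have h2 := nb_antitone h1
    have h3 := indep_nb_le (LB ++ G) p hIndLB'
    have h4 : (LB ++ G).length = LB.length + KS.length := by
      rw [List.length_append, hGdef, List.length_map]
    omega
  have hsplit : LA.length + LB.length = L.length := by
    rw [hLAdef, hLBdef]
    exact (List.length_eq_length_filter_add pA).symm
  omega

end COREBUILD

end RTNAux

namespace RTNAux

open RTN

section COREFINAL

variable {n : ℕ} [NeZero n]

lemma nb_pT_bound (p : Setoid (Iot n)) :
    nb (p ⊔ TT n) + (if p ⊔ TT n = ⊤ then (1 : ℤ) else 0) ≤ 2 := by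
  by_cases hδ : p ⊔ TT n = ⊤
  · rw [if_pos hδ, hδ, nb_top_eq_one]
    omega
  · rw [if_neg hδ]
    have h1 : nb (p ⊔ TT n) ≤ nb (TT n) := nb_antitone le_sup_right
    rw [nb_TT] at h1
    omega

lemma core (p : Setoid (Iot n)) :
    nb (p ⊔ QA n) + nb (p ⊔ QB n)
      + (if ∃ v : Iot n, IsSinglet p v ∧ v.1 = 0 then (1 : ℤ) else 0)
      + (if ∃ v : Iot n, IsSinglet p v ∧ v.1 = 1 then (1 : ℤ) else 0)
      + (if p ⊔ TT n = ⊤ then (1 : ℤ) else 0) ≤ nb p + 2 := by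
  classical
  have hT := nb_pT_bound p
  by_cases H0 : ∃ v : Iot n, IsSinglet p v ∧ v.1 = 0 <;>
    by_cases H1 : ∃ v : Iot n, IsSinglet p v ∧ v.1 = 1
  · obtain ⟨⟨c0, k0, h0⟩, hs0, hc0⟩ := id H0
    obtain ⟨⟨c1, k1, h1⟩, hs1, hc1⟩ := id H1
    dsimp at hc0 hc1
    subst hc0; subst hc1
    have hb := core_build p [(0, k0), (1, k1)] (by simp) ?_
    · rw [if_pos H0, if_pos H1]
      simp only [List.length_cons, List.length_nil] at hb
      omega
    · rintro ck hck
      rcases List.mem_cons.mp hck with rfl | hck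
      · exact ⟨h0, hs0⟩
      · rcases List.mem_cons.mp hck with rfl | hck
        · exact ⟨h1, hs1⟩
        · simp at hck
  · obtain ⟨⟨c0, k0, h0⟩, hs0, hc0⟩ := id H0
    dsimp at hc0
    subst hc0
    have hb := core_build p [(0, k0)] (by simp) ?_
    · rw [if_pos H0, if_neg H1]
      simp only [List.length_cons, List.length_nil] at hb
      omega
    · rintro ck hck
      rcases List.mem_cons.mp hck with rfl | hck
      · exact ⟨h0, hs0⟩
      · simp at hck
  · obtain ⟨⟨c1, k1, h1⟩, hs1, hc1⟩ := id H1
    dsimp at hc1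
    subst hc1
    have hb := core_build p [(1, k1)] (by simp) ?_
    · rw [if_neg H0, if_pos H1]
      simp only [List.length_cons, List.length_nil] at hb
      omega
    · rintro ck hck
      rcases List.mem_cons.mp hck with rfl | hck
      · exact ⟨h1, hs1⟩
      · simp at hck
  · have hb := core_build p [] (by simp) (by rintro ck hck; simp at hck)
    rw [if_neg H0, if_neg H1]
    simp only [List.length_nil] at hb
    omega

end COREFINAL

end RTNAux

namespace RTNAux

open RTN Equiv

section ORBITS

variable {α β : Type*}

lemma orbit_iff (g : Equiv.Perm α) (x y : α) :
    (orbitSetoid g).r x y ↔ ∃ k : ℤ, (g ^ k) x = y := Iff.rfl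

lemma orbit_invariant {g : Equiv.Perm α} {f : α → β} (hf : ∀ z, f (g z) = f z)
    {x y : α} (h : (orbitSetoid g).r x y) : f x = f y := by
  obtain ⟨k, rfl⟩ := h
  have hinv : ∀ z, f (g⁻¹ z) = f z := by
    intro z
    have h0 := hf (g⁻¹ z)
    rw [show g (g⁻¹ z) = z from Equiv.apply_symm_apply g z] at h0
    exact h0.symm
  have claim : ∀ k : ℤ, ∀ x : α, f ((g ^ k) x) = f x := by
    intro k
    induction k using Int.induction_on with
    | zero => intro x; simp
    | succ j ih =>
        intro x
        have : (g ^ ((j : ℤ) + 1)) x = (g ^ (j : ℤ)) (g x) := by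
          rw [zpow_add_one, Equiv.Perm.mul_apply]
        rw [this, ih (g x), hf]
    | pred j ih =>
        intro x
        have : (g ^ (-(j : ℤ) - 1)) x = (g ^ (-(j : ℤ))) (g⁻¹ x) := by
          rw [zpow_sub_one, Equiv.Perm.mul_apply]
        rw [this, ih (g⁻¹ x), hinv]
  exact (claim k _).symm

lemma orbit_of_pow {g : Equiv.Perm α} {x y : α} (t : ℕ) (h : (g ^ t) x = y) :
    (orbitSetoid g).r x y := ⟨(t : ℤ), by rwa [zpow_natCast]⟩

/-- `prodCongr` as a monoid hom on perms. -/
def prodHom (α β : Type*) : Equiv.Perm α × Equiv.Perm β →* Equiv.Perm (α × β) where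
  toFun p := Equiv.prodCongr p.1 p.2
  map_one' := by ext z <;> rfl
  map_mul' p q := by ext z <;> rfl

lemma prodCongr_pow (e : Equiv.Perm α) (f : Equiv.Perm β) (t : ℕ) :
    (Equiv.prodCongr e f) ^ t = Equiv.prodCongr (e ^ t) (f ^ t) := by
  have := map_pow (prodHom α β) (e, f) t
  simpa [prodHom, Prod.pow_def] using this.symm

lemma sumCongr_zpow (e f : Equiv.Perm α) (k : ℤ) :
    (Equiv.sumCongr e f) ^ k = Equiv.sumCongr (e ^ k) (f ^ k) := by
  have := map_zpow (Equiv.Perm.sumCongrHom α α) (e, f) k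
  simpa [Equiv.Perm.sumCongrHom, Prod.pow_def] using this.symm

open Fin.NatCast in
lemma finRotate_pow {N : ℕ} (t : ℕ) (i : Fin (N + 1)) :
    ((finRotate (N + 1)) ^ t) i = i + (t : Fin (N + 1)) := by
  induction t generalizing i with
  | zero => simp
  | succ t ih =>
      have h1 : (finRotate (N + 1)) ^ (t + 1) = (finRotate (N + 1)) ^ t * finRotate (N + 1) :=
        pow_succ _ _
      rw [h1, Equiv.Perm.mul_apply, finRotate_succ_apply, ih (i + 1)]
      push_cast
      abel

lemma finRotate_orbit_exists {N : ℕ} (i j : Fin (N + 1)) :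
    ∃ t : ℕ, ((finRotate (N + 1)) ^ t) i = j := by
  refine ⟨(j - i).val, ?_⟩
  rw [finRotate_pow, Fin.cast_val_eq_self, add_comm i (j - i), sub_add_cancel]

end ORBITS

end RTNAux

namespace RTNAux

open RTN Equiv

section PERMCHAR

lemma finRotate_orbit_exists' {N : ℕ} (hN : N ≠ 0) (i j : Fin N) :
    ∃ t : ℕ, ((finRotate N) ^ t) i = j := by
  obtain ⟨N', rfl⟩ : ∃ N', N = N' + 1 := ⟨N - 1, by omega⟩
  exact finRotate_orbit_exists i j

lemma permCongr_pow_apply {α β : Type*} (e : α ≃ β) (ρ : Equiv.Perm α) (t : ℕ) (z : β) :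
    ((e.permCongr ρ) ^ t) z = e ((ρ ^ t) (e.symm z)) := by
  induction t generalizing z with
  | zero => simp
  | succ t ih =>
      rw [pow_succ, Equiv.Perm.mul_apply, pow_succ, Equiv.Perm.mul_apply,
        Equiv.permCongr_apply, ih, Equiv.symm_apply_apply]

variable {n m : ℕ}

lemma refl_eq_one : (Equiv.refl (Fin n)) = (1 : Equiv.Perm (Fin n)) := rfl

lemma gB_orbit (hm2 : 2 ≤ m) (x y : Fin n × Fin m) :
    (orbitSetoid (gB n m)).r x y ↔ x.1 = y.1 := by
  constructor
  · exact orbit_invariant (fun z => rfl)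
  · intro h
    obtain ⟨t, ht⟩ := finRotate_orbit_exists' (by omega : m ≠ 0) x.2 y.2
    apply orbit_of_pow t
    show ((gB n m) ^ t) x = y
    unfold RTN.gB
    rw [prodCongr_pow, refl_eq_one, one_pow]
    have : (Equiv.prodCongr (1 : Equiv.Perm (Fin n)) ((finRotate m) ^ t)) x
        = (x.1, ((finRotate m) ^ t) x.2) := rfl
    rw [this, ht, h]

lemma gamma_apply (x : Fin n × Fin m) :
    gamma n m x = if m / 2 ≤ (x.2 : ℕ) then (finRotate n x.1, x.2) else x := rfl

lemma gA_orbit (x y : Fin n × Fin m) :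
    (orbitSetoid (gA n m)).r x y ↔
      (orbitSetoid (gB n m)).r (gamma n m x) (gamma n m y) := by
  unfold RTN.gA
  constructor
  · rintro ⟨k, hk⟩
    refine ⟨k, ?_⟩
    rw [show (gamma n m)⁻¹ * gB n m * gamma n m
        = (gamma n m)⁻¹ * gB n m * ((gamma n m)⁻¹)⁻¹ by rw [inv_inv], conj_zpow] at hk
    have h2 : ((gamma n m)⁻¹ * (gB n m) ^ k * ((gamma n m)⁻¹)⁻¹) x
        = (gamma n m)⁻¹ (((gB n m) ^ k) (gamma n m x)) := by
      rw [inv_inv, Equiv.Perm.mul_apply, Equiv.Perm.mul_apply]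
    rw [h2] at hk
    rw [← hk, show ∀ w, (gamma n m) ((gamma n m)⁻¹ w) = w from Equiv.apply_symm_apply (gamma n m)]
  · rintro ⟨k, hk⟩
    refine ⟨k, ?_⟩
    rw [show (gamma n m)⁻¹ * gB n m * gamma n m
        = (gamma n m)⁻¹ * gB n m * ((gamma n m)⁻¹)⁻¹ by rw [inv_inv], conj_zpow]
    have h2 : ((gamma n m)⁻¹ * (gB n m) ^ k * ((gamma n m)⁻¹)⁻¹) x
        = (gamma n m)⁻¹ (((gB n m) ^ k) (gamma n m x)) := by
      rw [inv_inv, Equiv.Perm.mul_apply, Equiv.Perm.mul_apply]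
    rw [h2, hk, show (gamma n m)⁻¹ ((gamma n m) y) = y from Equiv.symm_apply_apply (gamma n m) y]

variable (hm : m % 2 = 0)

lemma halfEquiv_val (h : Fin 2) (i : Fin (m / 2)) :
    (((halfEquiv m hm) (h, i) : Fin m) : ℕ) = (i : ℕ) + (m / 2) * (h : ℕ) := by
  unfold RTN.halfEquiv
  simp [finProdFinEquiv_apply_val]

lemma halfEquiv_branch (hm2 : 2 ≤ m) (ℓ : Fin m) :
    (m / 2 ≤ (ℓ : ℕ)) ↔ ((halfEquiv m hm).symm ℓ).1 = 1 := by
  set w := (halfEquiv m hm).symm ℓ with hw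
  have hℓ : ℓ = (halfEquiv m hm) (w.1, w.2) := by
    rw [hw]
    simp
  have hval : (ℓ : ℕ) = (w.2 : ℕ) + (m / 2) * (w.1 : ℕ) := by
    conv_lhs => rw [hℓ]
    exact halfEquiv_val hm w.1 w.2
  have hw2 : (w.2 : ℕ) < m / 2 := w.2.isLt
  rcases fin2_cases w.1 with h1 | h1 <;> rw [h1] at hval ⊢
  · simp only [Fin.val_zero, mul_zero, add_zero] at hval
    apply iff_of_false
    · omega
    · decide
  · simp only [Fin.val_one, mul_one] at hval
    apply iff_of_true
    · omega
    · rfl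

lemma X_invariant (z : Fin n × Fin m) :
    ((Xel n m hm z).1, ((halfEquiv m hm).symm (Xel n m hm z).2).1)
      = (z.1, ((halfEquiv m hm).symm z.2).1) := by
  have h1 : (Xel n m hm z).2
      = ((halfEquiv m hm).permCongr
          (Equiv.prodCongr (Equiv.refl (Fin 2)) (finRotate (m / 2)))) z.2 := rfl
  rw [Prod.mk.injEq]
  refine ⟨rfl, ?_⟩
  rw [h1, Equiv.permCongr_apply, Equiv.symm_apply_apply]
  rfl

lemma X_orbit (hm2 : 2 ≤ m) (x y : Fin n × Fin m) :
    (orbitSetoid (Xel n m hm)).r x y ↔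
      (x.1 = y.1 ∧ ((halfEquiv m hm).symm x.2).1 = ((halfEquiv m hm).symm y.2).1) := by
  constructor
  · intro h
    have := orbit_invariant
      (f := fun z : Fin n × Fin m => (z.1, ((halfEquiv m hm).symm z.2).1))
      (fun z => X_invariant hm z) h
    have h9 := congrArg (fun p : Fin n × Fin 2 => p.1) this
    have h10 := congrArg (fun p : Fin n × Fin 2 => p.2) this
    exact ⟨h9, h10⟩
  · rintro ⟨hk, hh⟩
    set w := (halfEquiv m hm).symm x.2 with hwdef
    set w' := (halfEquiv m hm).symm y.2 with hw'def
    obtain ⟨t, ht⟩ := finRotate_orbit_exists' (by omega : m / 2 ≠ 0) w.2 w'.2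
    apply orbit_of_pow t
    show ((Xel n m hm) ^ t) x = y
    unfold RTN.Xel
    rw [prodCongr_pow, refl_eq_one, one_pow]
    have h3 : (Equiv.prodCongr (1 : Equiv.Perm (Fin n))
        (((halfEquiv m hm).permCongr
          (Equiv.prodCongr (Equiv.refl (Fin 2)) (finRotate (m / 2)))) ^ t)) x
        = (x.1, (((halfEquiv m hm).permCongr
            (Equiv.prodCongr (Equiv.refl (Fin 2)) (finRotate (m / 2)))) ^ t) x.2) := rfl
    rw [h3, permCongr_pow_apply, prodCongr_pow, refl_eq_one, one_pow]
    have h4 : ((Equiv.prodCongr (1 : Equiv.Perm (Fin 2)) ((finRotate (m / 2)) ^ t)) w)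
        = (w.1, ((finRotate (m / 2)) ^ t) w.2) := rfl
    rw [← hwdef, h4, ht, hk]
    have h5 : (w.1, w'.2) = w' := by
      rw [Prod.ext_iff]
      exact ⟨hh, rfl⟩
    rw [h5, hw'def]
    simp

end PERMCHAR

end RTNAux

namespace RTNAux

open RTN Equiv

section SUMS

variable {β : Type*}

lemma orbit_sum_inl_inl (g : Equiv.Perm β) (x y : β) :
    (orbitSetoid (Equiv.sumCongr g g)).r (Sum.inl x) (Sum.inl y) ↔ (orbitSetoid g).r x y := by
  constructor
  · rintro ⟨k, hk⟩
    rw [sumCongr_zpow] at hk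
    refine ⟨k, ?_⟩
    simpa using hk
  · rintro ⟨k, hk⟩
    refine ⟨k, ?_⟩
    rw [sumCongr_zpow]
    simpa using congrArg (Sum.inl : β → β ⊕ β) hk

lemma orbit_sum_inr_inr (g : Equiv.Perm β) (x y : β) :
    (orbitSetoid (Equiv.sumCongr g g)).r (Sum.inr x) (Sum.inr y) ↔ (orbitSetoid g).r x y := by
  constructor
  · rintro ⟨k, hk⟩
    rw [sumCongr_zpow] at hk
    refine ⟨k, ?_⟩
    simpa using hk
  · rintro ⟨k, hk⟩
    refine ⟨k, ?_⟩
    rw [sumCongr_zpow]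
    simpa using congrArg (Sum.inr : β → β ⊕ β) hk

lemma orbit_sum_inl_inr (g : Equiv.Perm β) (x y : β) :
    ¬ (orbitSetoid (Equiv.sumCongr g g)).r (Sum.inl x) (Sum.inr y) := by
  rintro ⟨k, hk⟩
  rw [sumCongr_zpow] at hk
  simp at hk

lemma orbit_sum_inr_inl (g : Equiv.Perm β) (x y : β) :
    ¬ (orbitSetoid (Equiv.sumCongr g g)).r (Sum.inr x) (Sum.inl y) := by
  rintro ⟨k, hk⟩
  rw [sumCongr_zpow] at hk
  simp at hk

end SUMS

section PHI

/-- index `0` in the half. -/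
def half0 {m : ℕ} (hm2 : 2 ≤ m) : Fin (m / 2) := ⟨0, by omega⟩

/-- the distinguished representative of a block of `P(X̃)`. -/
def reprI (n m : ℕ) (hm : m % 2 = 0) (hm2 : 2 ≤ m) (a : Iot n) : DIdx n m :=
  if a.1 = 0 then Sum.inl (a.2.1, (halfEquiv m hm) (a.2.2, half0 hm2))
  else Sum.inr (a.2.1, (halfEquiv m hm) (a.2.2, half0 hm2))

/-- the enumeration of the blocks of `P(X̃)`. -/
def phi (n m : ℕ) (hm : m % 2 = 0) (hm2 : 2 ≤ m) (a : Iot n) : BXt n m hm :=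
  Quotient.mk (orbitSetoid (Xt n m hm)) (reprI n m hm hm2 a)

lemma hOf_mk {m : ℕ} (hm : m % 2 = 0) (h : Fin 2) (i : Fin (m / 2)) :
    ((halfEquiv m hm).symm ((halfEquiv m hm) (h, i))).1 = h := by
  rw [Equiv.symm_apply_apply]

lemma reprI_zero {n m : ℕ} (hm : m % 2 = 0) (hm2 : 2 ≤ m) (a : Iot n) (ha : a.1 = 0) :
    reprI n m hm hm2 a = Sum.inl (a.2.1, (halfEquiv m hm) (a.2.2, half0 hm2)) := by
  unfold reprI
  rw [if_pos ha]

lemma reprI_one {n m : ℕ} (hm : m % 2 = 0) (hm2 : 2 ≤ m) (a : Iot n) (ha : a.1 = 1) :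
    reprI n m hm hm2 a = Sum.inr (a.2.1, (halfEquiv m hm) (a.2.2, half0 hm2)) := by
  unfold reprI
  rw [if_neg (by rw [ha]; exact one_ne_zero)]

lemma Xt_rel_reprI {n m : ℕ} (hm : m % 2 = 0) (hm2 : 2 ≤ m) (a b : Iot n) :
    (orbitSetoid (Xt n m hm)).r (reprI n m hm hm2 a) (reprI n m hm hm2 b) ↔ a = b := by
  constructor
  · intro hrel
    rcases fin2_cases a.1 with ha | ha <;> rcases fin2_cases b.1 with hb | hb
    · rw [reprI_zero hm hm2 a ha, reprI_zero hm hm2 b hb, Xt, orbit_sum_inl_inl,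
        X_orbit hm hm2] at hrel
      obtain ⟨h1, h2⟩ := hrel
      rw [hOf_mk, hOf_mk] at h2
      exact Prod.ext (by rw [ha, hb]) (Prod.ext h1 h2)
    · rw [reprI_zero hm hm2 a ha, reprI_one hm hm2 b hb] at hrel
      exact absurd hrel (orbit_sum_inl_inr _ _ _)
    · rw [reprI_one hm hm2 a ha, reprI_zero hm hm2 b hb] at hrel
      exact absurd hrel (orbit_sum_inr_inl _ _ _)
    · rw [reprI_one hm hm2 a ha, reprI_one hm hm2 b hb, Xt, orbit_sum_inr_inr,
        X_orbit hm hm2] at hrel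
      obtain ⟨h1, h2⟩ := hrel
      rw [hOf_mk, hOf_mk] at h2
      exact Prod.ext (by rw [ha, hb]) (Prod.ext h1 h2)
  · rintro rfl
    exact (orbitSetoid (Xt n m hm)).refl _

lemma phi_injective {n m : ℕ} (hm : m % 2 = 0) (hm2 : 2 ≤ m) :
    Function.Injective (phi n m hm hm2) := by
  intro a b hab
  exact (Xt_rel_reprI hm hm2 a b).mp (Quotient.exact hab)

lemma phi_surjective {n m : ℕ} (hm : m % 2 = 0) (hm2 : 2 ≤ m) :
    Function.Surjective (phi n m hm hm2) := by
  intro u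
  obtain ⟨x, rfl⟩ := Quotient.exists_rep u
  rcases x with z | z
  · refine ⟨(0, z.1, ((halfEquiv m hm).symm z.2).1), Quot.sound ?_⟩
    rw [reprI_zero hm hm2 _ rfl, Xt, orbit_sum_inl_inl, X_orbit hm hm2]
    exact ⟨rfl, by rw [hOf_mk]⟩
  · refine ⟨(1, z.1, ((halfEquiv m hm).symm z.2).1), Quot.sound ?_⟩
    rw [reprI_one hm hm2 _ rfl, Xt, orbit_sum_inr_inr, X_orbit hm hm2]
    exact ⟨rfl, by rw [hOf_mk]⟩

lemma phi_bijective {n m : ℕ} (hm : m % 2 = 0) (hm2 : 2 ≤ m) :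
    Function.Bijective (phi n m hm hm2) :=
  ⟨phi_injective hm hm2, phi_surjective hm hm2⟩

end PHI

end RTNAux

namespace RTNAux

open RTN Equiv

section CHAR

variable {n m : ℕ} [NeZero n]

lemma Xt_le_gBt (hm : m % 2 = 0) (hm2 : 2 ≤ m) :
    orbitSetoid (Xt n m hm) ≤ orbitSetoid (gBt n m) := by
  intro x y h
  rcases x with x | x <;> rcases y with y | y
  · rw [Xt, orbit_sum_inl_inl, X_orbit hm hm2] at h
    exact (orbit_sum_inl_inl _ _ _).mpr ((gB_orbit hm2 _ _).mpr h.1)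
  · exact absurd h (orbit_sum_inl_inr _ _ _)
  · exact absurd h (orbit_sum_inr_inl _ _ _)
  · rw [Xt, orbit_sum_inr_inr, X_orbit hm hm2] at h
    exact (orbit_sum_inr_inr _ _ _).mpr ((gB_orbit hm2 _ _).mpr h.1)

lemma gamma_fst_of_X (hm : m % 2 = 0) (hm2 : 2 ≤ m) {x y : Fin n × Fin m}
    (h1 : x.1 = y.1) (h2 : ((halfEquiv m hm).symm x.2).1 = ((halfEquiv m hm).symm y.2).1) :
    (gamma n m x).1 = (gamma n m y).1 := by
  rw [gamma_apply, gamma_apply]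
  by_cases hx : m / 2 ≤ (x.2 : ℕ)
  · have hy : m / 2 ≤ (y.2 : ℕ) := by
      rw [halfEquiv_branch hm hm2, ← h2, ← halfEquiv_branch hm hm2]
      exact hx
    rw [if_pos hx, if_pos hy]
    exact congrArg (finRotate n) h1
  · have hy : ¬ m / 2 ≤ (y.2 : ℕ) := by
      rw [halfEquiv_branch hm hm2, ← h2, ← halfEquiv_branch hm hm2]
      exact hx
    rw [if_neg hx, if_neg hy]
    exact h1

lemma Xt_le_gAt (hm : m % 2 = 0) (hm2 : 2 ≤ m) :
    orbitSetoid (Xt n m hm) ≤ orbitSetoid (gAt n m) := by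
  intro x y h
  rcases x with x | x <;> rcases y with y | y
  · rw [Xt, orbit_sum_inl_inl, X_orbit hm hm2] at h
    exact (orbit_sum_inl_inl _ _ _).mpr ((gA_orbit _ _).mpr
      ((gB_orbit hm2 _ _).mpr (gamma_fst_of_X hm hm2 h.1 h.2)))
  · exact absurd h (orbit_sum_inl_inr _ _ _)
  · exact absurd h (orbit_sum_inr_inl _ _ _)
  · rw [Xt, orbit_sum_inr_inr, X_orbit hm hm2] at h
    exact (orbit_sum_inr_inr _ _ _).mpr ((gA_orbit _ _).mpr
      ((gB_orbit hm2 _ _).mpr (gamma_fst_of_X hm hm2 h.1 h.2)))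

lemma gamma_fst_reprI (hm : m % 2 = 0) (hm2 : 2 ≤ m) (k : Fin n) (h : Fin 2) :
    (gamma n m ((k, (halfEquiv m hm) (h, half0 hm2)) : Fin n × Fin m)).1
      = k + (if h = 0 then 0 else 1) := by
  rw [gamma_apply]
  have hval : (((halfEquiv m hm) (h, half0 hm2) : Fin m) : ℕ) = (m / 2) * (h : ℕ) := by
    rw [halfEquiv_val hm]
    simp [half0]
  rcases fin2_cases h with rfl | rfl
  · simp only [Fin.val_zero, mul_zero] at hval
    have hc : ¬ (m / 2 ≤ (((k, (halfEquiv m hm) ((0 : Fin 2), half0 hm2)) : Fin n × Fin m).2 : ℕ)) := by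
      show ¬ (m / 2 ≤ (((halfEquiv m hm) ((0 : Fin 2), half0 hm2) : Fin m) : ℕ))
      omega
    rw [if_neg hc, if_pos rfl, add_zero]
  · simp only [Fin.val_one, mul_one] at hval
    have hc : m / 2 ≤ (((k, (halfEquiv m hm) ((1 : Fin 2), half0 hm2)) : Fin n × Fin m).2 : ℕ) := by
      show m / 2 ≤ (((halfEquiv m hm) ((1 : Fin 2), half0 hm2) : Fin m) : ℕ)
      omega
    rw [if_pos hc, if_neg one_ne_zero]
    show (finRotate n k, ((halfEquiv m hm) ((1 : Fin 2), half0 hm2) : Fin m)).1 = k + 1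
    obtain ⟨n', rfl⟩ : ∃ n', n = n' + 1 := ⟨n - 1, Nat.succ_pred_eq_of_pos (Nat.pos_of_ne_zero (NeZero.ne n)) |>.symm⟩
    show finRotate (n' + 1) k = k + 1
    rw [finRotate_succ_apply]

lemma qBt_char (hm : m % 2 = 0) (hm2 : 2 ≤ m) (a b : Iot n) :
    (qBt n m hm).r (phi n m hm hm2 a) (phi n m hm hm2 b) ↔ (QB n).r a b := by
  have hsup : orbitSetoid (gBt n m) ⊔ orbitSetoid (Xt n m hm) = orbitSetoid (gBt n m) :=
    sup_eq_left.mpr (Xt_le_gBt hm hm2)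
  constructor
  · rintro ⟨x, y, hx, hy, hxy⟩
    rw [hsup] at hxy
    have hax : (orbitSetoid (Xt n m hm)).r x (reprI n m hm hm2 a) := Quotient.exact hx
    have hby : (orbitSetoid (Xt n m hm)).r y (reprI n m hm hm2 b) := Quotient.exact hy
    have hrel : (orbitSetoid (gBt n m)).r (reprI n m hm hm2 a) (reprI n m hm hm2 b) :=
      (orbitSetoid (gBt n m)).trans ((orbitSetoid (gBt n m)).symm (Xt_le_gBt hm hm2 hax))
        ((orbitSetoid (gBt n m)).trans hxy (Xt_le_gBt hm hm2 hby))
    rw [QB_iff]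
    rcases fin2_cases a.1 with ha | ha <;> rcases fin2_cases b.1 with hb | hb
    · rw [reprI_zero hm hm2 a ha, reprI_zero hm hm2 b hb, gBt, orbit_sum_inl_inl,
        gB_orbit hm2] at hrel
      exact Prod.ext (ha.trans hb.symm) hrel
    · rw [reprI_zero hm hm2 a ha, reprI_one hm hm2 b hb] at hrel
      exact absurd hrel (orbit_sum_inl_inr _ _ _)
    · rw [reprI_one hm hm2 a ha, reprI_zero hm hm2 b hb] at hrel
      exact absurd hrel (orbit_sum_inr_inl _ _ _)
    · rw [reprI_one hm hm2 a ha, reprI_one hm hm2 b hb, gBt, orbit_sum_inr_inr,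
        gB_orbit hm2] at hrel
      exact Prod.ext (ha.trans hb.symm) hrel
  · intro h
    rw [QB_iff] at h
    have h1 := congrArg (fun z : Fin 2 × Fin n => z.1) h
    have h2 := congrArg (fun z : Fin 2 × Fin n => z.2) h
    dsimp at h1 h2
    refine ⟨reprI n m hm hm2 a, reprI n m hm hm2 b, rfl, rfl, ?_⟩
    rw [hsup]
    rcases fin2_cases a.1 with ha | ha
    · rw [reprI_zero hm hm2 a ha, reprI_zero hm hm2 b (h1 ▸ ha)]
      exact (orbit_sum_inl_inl _ _ _).mpr ((gB_orbit hm2 _ _).mpr h2)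
    · rw [reprI_one hm hm2 a ha, reprI_one hm hm2 b (h1 ▸ ha)]
      exact (orbit_sum_inr_inr _ _ _).mpr ((gB_orbit hm2 _ _).mpr h2)

lemma qAt_char (hm : m % 2 = 0) (hm2 : 2 ≤ m) (a b : Iot n) :
    (qAt n m hm).r (phi n m hm hm2 a) (phi n m hm hm2 b) ↔ (QA n).r a b := by
  have hsup : orbitSetoid (gAt n m) ⊔ orbitSetoid (Xt n m hm) = orbitSetoid (gAt n m) :=
    sup_eq_left.mpr (Xt_le_gAt hm hm2)
  have hgA : ∀ c d : Iot n,
      (orbitSetoid (gAt n m)).r (reprI n m hm hm2 c) (reprI n m hm hm2 d) ↔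
        (c.1 = d.1 ∧ c.2.1 + (if c.2.2 = 0 then 0 else 1)
          = d.2.1 + (if d.2.2 = 0 then 0 else 1)) := by
    intro c d
    rcases fin2_cases c.1 with hc | hc <;> rcases fin2_cases d.1 with hd | hd
    · rw [reprI_zero hm hm2 c hc, reprI_zero hm hm2 d hd, gAt, orbit_sum_inl_inl,
        gA_orbit, gB_orbit hm2, gamma_fst_reprI hm hm2 c.2.1 c.2.2,
        gamma_fst_reprI hm hm2 d.2.1 d.2.2]
      constructor
      · intro h; exact ⟨hc.trans hd.symm, h⟩
      · intro h; exact h.2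
    · rw [reprI_zero hm hm2 c hc, reprI_one hm hm2 d hd]
      constructor
      · intro h; exact absurd h (orbit_sum_inl_inr _ _ _)
      · intro h; exact absurd h.1 (by rw [hc, hd]; exact zero_ne_one)
    · rw [reprI_one hm hm2 c hc, reprI_zero hm hm2 d hd]
      constructor
      · intro h; exact absurd h (orbit_sum_inr_inl _ _ _)
      · intro h; exact absurd h.1 (by rw [hc, hd]; exact one_ne_zero)
    · rw [reprI_one hm hm2 c hc, reprI_one hm hm2 d hd, gAt, orbit_sum_inr_inr,
        gA_orbit, gB_orbit hm2, gamma_fst_reprI hm hm2 c.2.1 c.2.2,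
        gamma_fst_reprI hm hm2 d.2.1 d.2.2]
      constructor
      · intro h; exact ⟨hc.trans hd.symm, h⟩
      · intro h; exact h.2
  constructor
  · rintro ⟨x, y, hx, hy, hxy⟩
    rw [hsup] at hxy
    have hax : (orbitSetoid (Xt n m hm)).r x (reprI n m hm hm2 a) := Quotient.exact hx
    have hby : (orbitSetoid (Xt n m hm)).r y (reprI n m hm hm2 b) := Quotient.exact hy
    have hrel : (orbitSetoid (gAt n m)).r (reprI n m hm hm2 a) (reprI n m hm hm2 b) :=
      (orbitSetoid (gAt n m)).trans ((orbitSetoid (gAt n m)).symm (Xt_le_gAt hm hm2 hax))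
        ((orbitSetoid (gAt n m)).trans hxy (Xt_le_gAt hm hm2 hby))
    rw [hgA] at hrel
    rw [QA_iff]
    exact Prod.ext hrel.1 hrel.2
  · intro h
    rw [QA_iff] at h
    have h1 := congrArg (fun z : Fin 2 × Fin n => z.1) h
    have h2 := congrArg (fun z : Fin 2 × Fin n => z.2) h
    dsimp at h1 h2
    refine ⟨reprI n m hm hm2 a, reprI n m hm hm2 b, rfl, rfl, ?_⟩
    rw [hsup, hgA]
    exact ⟨h1, h2⟩

lemma inCopy1_phi (hm : m % 2 = 0) (hm2 : 2 ≤ m) (a : Iot n) :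
    inCopy1 (phi n m hm hm2 a) ↔ a.1 = 0 := by
  constructor
  · rintro ⟨x, hx⟩
    have hrel : (orbitSetoid (Xt n m hm)).r (Sum.inl x) (reprI n m hm hm2 a) :=
      Quotient.exact hx
    rcases fin2_cases a.1 with ha | ha
    · exact ha
    · rw [reprI_one hm hm2 a ha] at hrel
      exact absurd hrel (orbit_sum_inl_inr _ _ _)
  · intro ha
    refine ⟨(a.2.1, (halfEquiv m hm) (a.2.2, half0 hm2)), ?_⟩
    show _ = Quotient.mk _ (reprI n m hm hm2 a)
    rw [reprI_zero hm hm2 a ha]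

lemma tau_char (hm : m % 2 = 0) (hm2 : 2 ≤ m) (a b : Iot n) :
    (tau n m hm).r (phi n m hm hm2 a) (phi n m hm hm2 b) ↔ (TT n).r a b := by
  show (inCopy1 _ ↔ inCopy1 _) ↔ _
  rw [inCopy1_phi hm hm2 a, inCopy1_phi hm hm2 b, TT_iff]
  rcases fin2_cases a.1 with ha | ha <;> rcases fin2_cases b.1 with hb | hb <;>
    rw [ha, hb] <;> simp

end CHAR

end RTNAux

namespace RTNAux

open RTN

section COMAP

variable {α β : Type*} {f : α → β}

lemma comap_rel (f : α → β) (s : Setoid β) (a b : α) :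
    (Setoid.comap f s).r a b ↔ s.r (f a) (f b) := Iff.rfl

lemma comap_sup (hf : Function.Bijective f) (s t : Setoid β) :
    Setoid.comap f (s ⊔ t) = Setoid.comap f s ⊔ Setoid.comap f t := by
  apply le_antisymm
  · intro a b hab
    have hab' : (s ⊔ t).r (f a) (f b) := hab
    rw [Setoid.sup_eq_eqvGen] at hab'
    set e := Equiv.ofBijective f hf with he
    have key : ∀ u v, Relation.EqvGen (fun x y => s.r x y ∨ t.r x y) u v →
        (Setoid.comap f s ⊔ Setoid.comap f t).r (e.symm u) (e.symm v) := by
      intro u v huv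
      induction huv with
      | rel u v h =>
          have hu : f (e.symm u) = u := e.apply_symm_apply u
          have hv : f (e.symm v) = v := e.apply_symm_apply v
          rcases h with h | h
          · refine le_sup_left (α := Setoid α) (b := Setoid.comap f t) ?_
            show s.r (f (e.symm u)) (f (e.symm v))
            rw [hu, hv]
            exact h
          · refine le_sup_right (α := Setoid α) (a := Setoid.comap f s) ?_
            show t.r (f (e.symm u)) (f (e.symm v))
            rw [hu, hv]
            exact h
      | refl u => exact (Setoid.comap f s ⊔ Setoid.comap f t).refl _
      | symm _ _ _ ih => exact (Setoid.comap f s ⊔ Setoid.comap f t).symm ih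
      | trans _ _ _ _ _ ih1 ih2 => exact (Setoid.comap f s ⊔ Setoid.comap f t).trans ih1 ih2
    have hres := key (f a) (f b) hab'
    have ha : e.symm (f a) = a := e.symm_apply_apply a
    have hb : e.symm (f b) = b := e.symm_apply_apply b
    rwa [ha, hb] at hres
  · exact sup_le (fun a b hab => le_sup_left (α := Setoid β) hab)
      (fun a b hab => le_sup_right (α := Setoid β) hab)

lemma comap_nb (hf : Function.Bijective f) (s : Setoid β) :
    nb (Setoid.comap f s) = nb s := by
  unfold RTN.nb
  congr 1
  apply Nat.card_eq_of_bijective (Quotient.map' f (fun a b h => h))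
  constructor
  · intro z z'
    obtain ⟨a, rfl⟩ := Quotient.exists_rep z
    obtain ⟨b, rfl⟩ := Quotient.exists_rep z'
    intro h
    have h2 : Quotient.mk s (f a) = Quotient.mk s (f b) := h
    have h3 : s.r (f a) (f b) := Quotient.exact h2
    exact Quotient.sound h3
  · intro z
    obtain ⟨x, rfl⟩ := Quotient.exists_rep z
    obtain ⟨a, rfl⟩ := hf.2 x
    exact ⟨Quotient.mk _ a, rfl⟩

lemma comap_singlet (hf : Function.Bijective f) (q : Setoid β) (a : α) :
    IsSinglet (Setoid.comap f q) a ↔ IsSinglet q (f a) := by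
  constructor
  · intro h z hz
    obtain ⟨b, rfl⟩ := hf.2 z
    have := h b hz
    rw [this]
  · intro h z hz
    exact hf.1 (h (f z) hz)

lemma comap_top (hf : Function.Bijective f) (s : Setoid β) :
    Setoid.comap f s = ⊤ ↔ s = ⊤ := by
  constructor
  · intro h
    apply Setoid.ext
    intro x y
    constructor
    · intro _; trivial
    · intro _
      obtain ⟨a, rfl⟩ := hf.2 x
      obtain ⟨b, rfl⟩ := hf.2 y
      show (Setoid.comap f s).r a b
      rw [h]
      trivial
  · rintro rfl
    apply Setoid.ext
    intro x y
    constructor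
    · intro _; trivial
    · intro _; trivial

end COMAP

end RTNAux


/-- For the doubled standard elements `g̃_A, g̃_B, X̃ ∈ S_{2mn}` and every
`q ∈ P_{4n}`:
`d(q̃_A,q) + d(q,q̃_B) ≥ d(q̃_A,q̃_B) + 2(1-δ_{#₁⁽¹⁾(q),0}) + 2(1-δ_{#₁⁽²⁾(q),0}) + 2δ_{q∨τ,𝟙}`. -/
theorem doubled_improved_triangle_inequality {n m : ℕ} (hn : 2 ≤ n) (hm2 : 2 ≤ m)
    (hm : m % 2 = 0) (q : Setoid (RTN.BXt n m hm)) :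
    RTN.pdist (RTN.qAt n m hm) q + RTN.pdist q (RTN.qBt n m hm) ≥
      RTN.pdist (RTN.qAt n m hm) (RTN.qBt n m hm)
      + 2 * (1 - if RTN.nS1 q = 0 then (1 : ℤ) else 0)
      + 2 * (1 - if RTN.nS2 q = 0 then (1 : ℤ) else 0)
      + 2 * (if q ⊔ RTN.tau n m hm = ⊤ then (1 : ℤ) else 0) := by
  classical
  haveI : NeZero n := ⟨by omega⟩
  have hf := RTNAux.phi_bijective (n := n) hm hm2
  set p : Setoid (RTNAux.Iot n) := Setoid.comap (RTNAux.phi n m hm hm2) q with hp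
  have eA : Setoid.comap (RTNAux.phi n m hm hm2) (RTN.qAt n m hm) = RTNAux.QA n :=
    Setoid.ext (fun a b => RTNAux.qAt_char hm hm2 a b)
  have eB : Setoid.comap (RTNAux.phi n m hm hm2) (RTN.qBt n m hm) = RTNAux.QB n :=
    Setoid.ext (fun a b => RTNAux.qBt_char hm hm2 a b)
  have eT : Setoid.comap (RTNAux.phi n m hm hm2) (RTN.tau n m hm) = RTNAux.TT n :=
    Setoid.ext (fun a b => RTNAux.tau_char hm hm2 a b)
  have c1 : Setoid.comap (RTNAux.phi n m hm hm2) (RTN.qAt n m hm ⊔ q)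
      = p ⊔ RTNAux.QA n := by
    rw [RTNAux.comap_sup hf, eA, ← hp, sup_comm]
  have c2 : Setoid.comap (RTNAux.phi n m hm hm2) (q ⊔ RTN.qBt n m hm)
      = p ⊔ RTNAux.QB n := by
    rw [RTNAux.comap_sup hf, eB, ← hp]
  have c3 : Setoid.comap (RTNAux.phi n m hm hm2) (RTN.qAt n m hm ⊔ RTN.qBt n m hm)
      = RTNAux.TT n := by
    rw [RTNAux.comap_sup hf, eA, eB, RTNAux.QA_sup_QB]
  have c4 : Setoid.comap (RTNAux.phi n m hm hm2) (q ⊔ RTN.tau n m hm)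
      = p ⊔ RTNAux.TT n := by
    rw [RTNAux.comap_sup hf, eT, ← hp]
  have e0 : RTN.nb q = RTN.nb p := (RTNAux.comap_nb hf q).symm
  have e1 : RTN.nb (RTN.qAt n m hm ⊔ q) = RTN.nb (p ⊔ RTNAux.QA n) := by
    rw [← c1, RTNAux.comap_nb hf]
  have e2 : RTN.nb (q ⊔ RTN.qBt n m hm) = RTN.nb (p ⊔ RTNAux.QB n) := by
    rw [← c2, RTNAux.comap_nb hf]
  have e3 : RTN.nb (RTN.qAt n m hm ⊔ RTN.qBt n m hm) = 2 := by
    rw [← RTNAux.comap_nb hf (RTN.qAt n m hm ⊔ RTN.qBt n m hm), c3, RTNAux.nb_TT]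
  have e4 : (q ⊔ RTN.tau n m hm = ⊤) ↔ (p ⊔ RTNAux.TT n = ⊤) := by
    rw [← c4]
    exact (RTNAux.comap_top hf _).symm
  have s1 : RTN.nS1 q ≠ 0 → ∃ v : RTNAux.Iot n, RTN.IsSinglet p v ∧ v.1 = 0 := by
    intro h
    have hcard : Nat.card {u : RTN.BXt n m hm // RTN.IsSinglet q u ∧ RTN.inCopy1 u} ≠ 0 := by
      unfold RTN.nS1 at h
      exact_mod_cast h
    obtain ⟨⟨u, hu1, hu2⟩⟩ := (Nat.card_ne_zero.mp hcard).1
    obtain ⟨a, rfl⟩ := RTNAux.phi_surjective hm hm2 u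
    exact ⟨a, (RTNAux.comap_singlet hf q a).mpr hu1, (RTNAux.inCopy1_phi hm hm2 a).mp hu2⟩
  have s2 : RTN.nS2 q ≠ 0 → ∃ v : RTNAux.Iot n, RTN.IsSinglet p v ∧ v.1 = 1 := by
    intro h
    have hcard : Nat.card {u : RTN.BXt n m hm // RTN.IsSinglet q u ∧ ¬ RTN.inCopy1 u} ≠ 0 := by
      unfold RTN.nS2 at h
      exact_mod_cast h
    obtain ⟨⟨u, hu1, hu2⟩⟩ := (Nat.card_ne_zero.mp hcard).1
    obtain ⟨a, rfl⟩ := RTNAux.phi_surjective hm hm2 u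
    refine ⟨a, (RTNAux.comap_singlet hf q a).mpr hu1, ?_⟩
    rcases RTNAux.fin2_cases a.1 with ha | ha
    · exact absurd ((RTNAux.inCopy1_phi hm hm2 a).mpr ha) hu2
    · exact ha
  have hcore := RTNAux.core p
  have t1 : (1 - (if RTN.nS1 q = 0 then (1 : ℤ) else 0))
      ≤ (if ∃ v : RTNAux.Iot n, RTN.IsSinglet p v ∧ v.1 = 0 then (1 : ℤ) else 0) := by
    by_cases h : RTN.nS1 q = 0
    · rw [if_pos h]
      split_ifs <;> omega
    · rw [if_neg h, if_pos (s1 h)]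
      omega
  have t2 : (1 - (if RTN.nS2 q = 0 then (1 : ℤ) else 0))
      ≤ (if ∃ v : RTNAux.Iot n, RTN.IsSinglet p v ∧ v.1 = 1 then (1 : ℤ) else 0) := by
    by_cases h : RTN.nS2 q = 0
    · rw [if_pos h]
      split_ifs <;> omega
    · rw [if_neg h, if_pos (s2 h)]
      omega
  have t3 : (if q ⊔ RTN.tau n m hm = ⊤ then (1 : ℤ) else 0)
      = (if p ⊔ RTNAux.TT n = ⊤ then (1 : ℤ) else 0) := by
    exact if_congr e4 rfl rfl
  unfold RTN.pdist
  rw [e1, e2, e3, e0, t3]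
  linarith [hcore, t1, t2]
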